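/- arXiv:1711.10920 — 7 statements merged into one kernel-verified Lean document; each statement's English description precedes it below -/
import Mathlib

section
/- In the majority model on the cycle C_n, if some configuration contains a monochromatic pair of adjacent vertices of each color (a blue pair and a red pair), then the process reaches a fixed configuration (period one) in at most n/2 steps, and that final configuration is bichromatic. -/
/-- One synchronous step of the majority model on the cycle `C_n`: each vertex adopts the
most frequent color among its two neighbors, keeping its own color in case of a tie. -/
def cycStep (n : ℕ) (g : ZMod n → Bool) : ZMod n → Bool :=
  fun i => if g (i - 1) = g (i + 1) then g (i - 1) else g i

namespace CycAux

/-- `v` is covered if it lies in a monochromatic pair. -/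
def covered (n : ℕ) (f : ZMod n → Bool) (v : ZMod n) : Prop :=
  f v = f (v + 1) ∨ f (v - 1) = f v

lemma boolKey (p q a b c d e : Bool) (h : c = d ∨ b = c) :
    ((if b = d then b else c) = (if c = e then c else d) ∨
      (if a = c then a else b) = (if b = d then b else c)) ∧
    ((if c = e then c else d) = (if d = q then d else e) ∨
      (if b = d then b else c) = (if c = e then c else d)) ∧
    ((if a = c then a else b) = (if b = d then b else c) ∨
      (if p = b then p else a) = (if a = c then a else b)) := by
  revert h p q a b c d e; decide

lemma key (n : ℕ) (f : ZMod n → Bool) (v : ZMod n) (h : covered n f v) :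
    covered n (cycStep n f) v ∧ covered n (cycStep n f) (v + 1) ∧
      covered n (cycStep n f) (v - 1) := by
  have e1 : v + 1 - 1 = v := by ring
  have e2 : v + 1 + 1 = v + 2 := by ring
  have e3 : v - 1 - 1 = v - 2 := by ring
  have e4 : v - 1 + 1 = v := by ring
  have e5 : v + 2 - 1 = v + 1 := by ring
  have e6 : v + 2 + 1 = v + 3 := by ring
  have e7 : v - 2 - 1 = v - 3 := by ring
  have e8 : v - 2 + 1 = v - 1 := by ring
  simp only [covered, cycStep, e1, e2, e3, e4, e5, e6, e7, e8] at h ⊢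
  exact boolKey (f (v-3)) (f (v+3)) (f (v-2)) (f (v-1)) (f v) (f (v+1)) (f (v+2)) h

lemma spread (n : ℕ) (g : ZMod n → Bool) (v : ZMod n) (h : covered n g v) :
    ∀ k : ℕ, ∀ j : ℤ, j.natAbs ≤ k → covered n ((cycStep n)^[k] g) (v + (j : ZMod n)) := by
  intro k
  induction k with
  | zero =>
      intro j hj
      have hj0 : j = 0 := by omega
      subst hj0; simpa using h
  | succ k ih =>
      intro j hj
      rw [Function.iterate_succ_apply']
      rcases lt_trichotomy j 0 with hneg | hz | hpos
      · have h1 : (j + 1).natAbs ≤ k := by omega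
        have hk := (key n _ _ (ih (j + 1) h1)).2.2
        have hv : v + ((j : ℤ) : ZMod n) = v + (((j + 1 : ℤ)) : ZMod n) - 1 := by
          push_cast; ring
        rw [hv]; exact hk
      · subst hz
        have hk := (key n _ _ (ih 0 (by omega))).1
        simpa using hk
      · have h1 : (j - 1).natAbs ≤ k := by omega
        have hk := (key n _ _ (ih (j - 1) h1)).2.1
        have hv : v + ((j : ℤ) : ZMod n) = v + (((j - 1 : ℤ)) : ZMod n) + 1 := by
          push_cast; ring
        rw [hv]; exact hk

lemma pair_persist (n : ℕ) (f : ZMod n → Bool) (i : ZMod n) (h : f i = f (i + 1)) :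
    cycStep n f i = f i ∧ cycStep n f (i + 1) = f i := by
  constructor
  · show (if f (i - 1) = f (i + 1) then f (i - 1) else f i) = f i
    split <;> simp_all
  · show (if f (i + 1 - 1) = f (i + 1 + 1) then f (i + 1 - 1) else f (i + 1)) = f i
    rw [show i + 1 - 1 = i from by ring]
    split <;> simp_all

lemma pair_iter (n : ℕ) (g : ZMod n → Bool) (i : ZMod n) (h : g i = g (i + 1)) :
    ∀ k, (cycStep n)^[k] g i = g i ∧ (cycStep n)^[k] g (i + 1) = g i := by
  intro k; induction k with
  | zero => exact ⟨rfl, h.symm⟩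
  | succ k ih =>
      rw [Function.iterate_succ_apply']
      have h' : (cycStep n)^[k] g i = (cycStep n)^[k] g (i + 1) := by rw [ih.1, ih.2]
      have hp := pair_persist n _ i h'
      exact ⟨hp.1.trans ih.1, hp.2.trans ih.1⟩

lemma reach (n : ℕ) (hn : 3 ≤ n) (i w : ZMod n) :
    ∃ j : ℤ, j.natAbs ≤ n / 2 ∧ w = i + (j : ZMod n) := by
  haveI : NeZero n := ⟨by omega⟩
  have hdn : (w - i).val < n := ZMod.val_lt _
  have hcast : (((w - i).val : ℕ) : ZMod n) = w - i := ZMod.natCast_rightInverse _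
  by_cases hc : (w - i).val ≤ n / 2
  · refine ⟨((w - i).val : ℤ), by omega, ?_⟩
    push_cast [hcast]
    ring
  · refine ⟨((w - i).val : ℤ) - n, by omega, ?_⟩
    push_cast [hcast]
    simp [ZMod.natCast_self]
end CycAux

/-- If a configuration on `C_n` contains a blue pair and a red pair, then the majority
process reaches a fixed configuration within `n/2` steps, and that fixed configuration
is bichromatic. -/
theorem stmt1 (n : ℕ) (hn : 3 ≤ n) (g : ZMod n → Bool)
    (hblue : ∃ i : ZMod n, g i = true ∧ g (i + 1) = true)
    (hred : ∃ i : ZMod n, g i = false ∧ g (i + 1) = false) :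
    cycStep n ((cycStep n)^[n / 2] g) = (cycStep n)^[n / 2] g ∧
      (∃ v, (cycStep n)^[n / 2] g v = true) ∧
      (∃ v, (cycStep n)^[n / 2] g v = false) := by
  obtain ⟨ib, hb1, hb2⟩ := hblue
  obtain ⟨ir, hr1, hr2⟩ := hred
  have hcovall : ∀ w, CycAux.covered n ((cycStep n)^[n / 2] g) w := by
    intro w
    obtain ⟨j, hj, rfl⟩ := CycAux.reach n hn ib w
    exact CycAux.spread n g ib (Or.inl (hb1.trans hb2.symm)) (n / 2) j hj
  refine ⟨?_, ⟨ib, ?_⟩, ⟨ir, ?_⟩⟩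
  · funext i
    show (if ((cycStep n)^[n / 2] g) (i - 1) = ((cycStep n)^[n / 2] g) (i + 1)
        then ((cycStep n)^[n / 2] g) (i - 1) else ((cycStep n)^[n / 2] g) i)
        = ((cycStep n)^[n / 2] g) i
    by_cases hsp : ((cycStep n)^[n / 2] g) (i - 1) = ((cycStep n)^[n / 2] g) (i + 1)
    · rw [if_pos hsp]
      rcases hcovall i with hcv | hcv
      · exact hsp.trans hcv.symm
      · exact hcv
    · rw [if_neg hsp]
  · rw [(CycAux.pair_iter n g ib (hb1.trans hb2.symm) (n / 2)).1, hb1]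
  · rw [(CycAux.pair_iter n g ir (hr1.trans hr2.symm) (n / 2)).1, hr1]
end

section
/- Let G=(V,E) be a graph and let V'_1,...,V'_k be pairwise disjoint b-eternal sets in the (biased) majority model, with s = max_j |V'_j|. If each vertex of G is independently colored blue with probability p_b in the initial generation, then the probability that the process ever reaches an all-red generation is at most exp(-k * p_b^s). -/
open scoped Classical

/-- Number of blue neighbors of `v`. -/
def blueCount {V : Type*} [Fintype V] [DecidableEq V] (G : SimpleGraph V)
    [DecidableRel G.Adj] (g : V → Bool) (v : V) : ℕ :=
  ((G.neighborFinset v).filter fun u => g u = true).card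

/-- Number of red neighbors of `v`. -/
def redCount {V : Type*} [Fintype V] [DecidableEq V] (G : SimpleGraph V)
    [DecidableRel G.Adj] (g : V → Bool) (v : V) : ℕ :=
  ((G.neighborFinset v).filter fun u => g u = false).card

/-- One synchronous step of the majority model: each vertex adopts the strict-majority
color of its neighborhood, keeping its current color in case of a tie. -/
def majStep {V : Type*} [Fintype V] [DecidableEq V] (G : SimpleGraph V)
    [DecidableRel G.Adj] (g : V → Bool) : V → Bool :=
  fun v =>
    if redCount G g v < blueCount G g v then true
    else if blueCount G g v < redCount G g v then false
    else g v

/-- One synchronous step of the biased majority model: ties become blue. -/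
def bmajStep {V : Type*} [Fintype V] [DecidableEq V] (G : SimpleGraph V)
    [DecidableRel G.Adj] (g : V → Bool) : V → Bool :=
  fun v => decide (redCount G g v ≤ blueCount G g v)

/-- Probability, under the product measure where each vertex is blue (`true`)
independently with probability `p`, of the event `E`. -/
noncomputable def pr {α : Type*} [Fintype α] [DecidableEq α] (p : ℝ)
    (E : (α → Bool) → Prop) : ℝ :=
  ∑ g : α → Bool, if E g then (∏ v, if g v = true then p else 1 - p) else 0

section Aux
variable {α : Type*} [Fintype α] [DecidableEq α] {p : ℝ}

lemma sum_pi_bool {β : Type*} [Fintype β] [DecidableEq β] (f : β → Bool → ℝ) :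
    ∑ h : β → Bool, ∏ v, f v (h v) = ∏ v, (f v true + f v false) := by
  rw [← Fintype.prod_sum fun v b => f v b]
  refine Finset.prod_congr rfl fun v _ => ?_
  simp [Fintype.sum_bool]

omit [DecidableEq α] in
lemma weight_nonneg (hp0 : 0 ≤ p) (hp1 : p ≤ 1) (g : α → Bool) :
    0 ≤ ∏ v, if g v = true then p else 1 - p :=
  Finset.prod_nonneg fun v _ => by split_ifs <;> linarith

lemma sum_weight :
    ∑ g : α → Bool, (∏ v, if g v = true then p else 1 - p) = 1 := by
  refine (sum_pi_bool (β := α) fun v b => if b = true then p else 1 - p).trans ?_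
  simp

lemma pr_true : pr p (fun _ : α → Bool => True) = 1 := by
  simp only [pr, if_true]
  exact sum_weight

lemma pr_mono (hp0 : 0 ≤ p) (hp1 : p ≤ 1) {E F : (α → Bool) → Prop}
    (h : ∀ g, E g → F g) : pr p E ≤ pr p F := by
  refine Finset.sum_le_sum fun g _ => ?_
  by_cases hE : E g
  · simp [hE, h g hE]
  · simp only [hE, if_false]
    split_ifs
    · exact weight_nonneg hp0 hp1 g
    · exact le_refl _

lemma pr_congr {E F : (α → Bool) → Prop} (h : ∀ g, E g ↔ F g) : pr p E = pr p F := by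
  refine Finset.sum_congr rfl fun g _ => ?_
  simp [h g]

lemma pr_add_compl {E : (α → Bool) → Prop} : pr p E + pr p (fun g => ¬ E g) = 1 := by
  rw [← sum_weight (p := p) (α := α), pr, pr, ← Finset.sum_add_distrib]
  refine Finset.sum_congr rfl fun g _ => ?_
  by_cases hE : E g <;> simp [hE]

lemma pr_allblue (S : Finset α) :
    pr p (fun g => ∀ v ∈ S, g v = true) = p ^ S.card := by
  calc pr p (fun g => ∀ v ∈ S, g v = true)
      = ∑ g : α → Bool, ∏ v, (if v ∈ S then (if g v = true then p else 0)
            else (if g v = true then p else 1 - p)) := by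
        refine Finset.sum_congr rfl fun g _ => ?_
        by_cases hall : ∀ v ∈ S, g v = true
        · rw [if_pos hall]
          refine Finset.prod_congr rfl fun v _ => ?_
          by_cases hv : v ∈ S
          · simp [hv, hall v hv]
          · simp [hv]
        · rw [if_neg hall]
          push_neg at hall
          obtain ⟨v, hvS, hv⟩ := hall
          refine (Finset.prod_eq_zero (Finset.mem_univ v) ?_).symm
          simp [hvS, hv]
    _ = ∏ v, ((if v ∈ S then (if (true : Bool) = true then p else 0)
            else (if (true : Bool) = true then p else 1 - p)) +
          (if v ∈ S then (if (false : Bool) = true then p else 0)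
            else (if (false : Bool) = true then p else 1 - p))) :=
        sum_pi_bool (β := α) fun v b => (if v ∈ S then (if b = true then p else 0)
            else (if b = true then p else 1 - p))
    _ = ∏ v, (if v ∈ S then p else 1) := by
        refine Finset.prod_congr rfl fun v _ => ?_
        by_cases hv : v ∈ S <;> simp [hv]
    _ = p ^ S.card := by
        rw [Finset.prod_ite_mem Finset.univ S, Finset.univ_inter, Finset.prod_const]

lemma pr_indep_mul (S : Finset α) (E F : (α → Bool) → Prop)
    (hE : ∀ g g' : α → Bool, (∀ v ∈ S, g v = g' v) → (E g ↔ E g'))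
    (hF : ∀ g g' : α → Bool, (∀ v ∉ S, g v = g' v) → (F g ↔ F g')) :
    pr p (fun g => E g ∧ F g) = pr p E * pr p F := by
  set e := (Equiv.piEquivPiSubtypeProd (· ∈ S) fun _ : α => Bool) with he
  set ext : (∀ v : {v // v ∈ S}, Bool) → (∀ v : {v // ¬ v ∈ S}, Bool) → (α → Bool) :=
    fun a b => e.symm (a, b) with hext
  have hext_mem : ∀ a b (v : α) (hv : v ∈ S), ext a b v = a ⟨v, hv⟩ := by
    intro a b v hv
    simp [hext, he, Equiv.piEquivPiSubtypeProd_symm_apply, dif_pos hv]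
  have hext_not : ∀ a b (v : α) (hv : ¬ v ∈ S), ext a b v = b ⟨v, hv⟩ := by
    intro a b v hv
    simp [hext, he, Equiv.piEquivPiSubtypeProd_symm_apply, dif_neg hv]
  set WA : (∀ v : {v // v ∈ S}, Bool) → ℝ :=
    fun a => ∏ v, if a v = true then p else 1 - p with hWA
  set WB : (∀ v : {v // ¬ v ∈ S}, Bool) → ℝ :=
    fun b => ∏ v, if b v = true then p else 1 - p with hWB
  have hW : ∀ a b, (∏ v, if ext a b v = true then p else 1 - p) = WA a * WB b := by
    intro a b
    rw [hWA, hWB, ← Fintype.prod_subtype_mul_prod_subtype (· ∈ S)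
      (fun v => if ext a b v = true then p else 1 - p)]
    congr 1
    · refine Finset.prod_congr (congrArg (fun I => @Finset.univ _ I) (Subsingleton.elim _ _))
        fun v _ => by rw [hext_mem a b v.1 v.2]
    · refine Finset.prod_congr (congrArg (fun I => @Finset.univ _ I) (Subsingleton.elim _ _))
        fun v _ => by rw [hext_not a b v.1 v.2]
  have hEiff : ∀ a b, E (ext a b) ↔ E (ext a (fun _ => true)) := by
    intro a b
    exact hE _ _ fun v hv => by rw [hext_mem a b v hv, hext_mem a _ v hv]
  have hFiff : ∀ a b, F (ext a b) ↔ F (ext (fun _ => true) b) := by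
    intro a b
    exact hF _ _ fun v hv => by rw [hext_not a b v hv, hext_not _ b v hv]
  have hsum : ∀ (P : (α → Bool) → Prop),
      pr p P = ∑ a, ∑ b, (if P (ext a b) then WA a * WB b else 0) := by
    intro P
    rw [pr, ← Equiv.sum_comp e.symm
      (fun g => if P g then (∏ v, if g v = true then p else 1 - p) else 0),
      Fintype.sum_prod_type]
    exact Finset.sum_congr rfl fun a _ => Finset.sum_congr rfl fun b _ => by
      rw [← hW a b]
  have hB1 : ∑ b, WB b = 1 := sum_weight
  have hA1 : ∑ a, WA a = 1 := sum_weight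
  rw [hsum (fun g => E g ∧ F g), hsum E, hsum F]
  have lhs : ∑ a, ∑ b, (if E (ext a b) ∧ F (ext a b) then WA a * WB b else 0)
      = (∑ a, if E (ext a (fun _ => true)) then WA a else 0)
        * (∑ b, if F (ext (fun _ => true) b) then WB b else 0) := by
    rw [Finset.sum_mul_sum]
    refine Finset.sum_congr rfl fun a _ => Finset.sum_congr rfl fun b _ => ?_
    have e1 := hEiff a b
    have e2 := hFiff a b
    by_cases h1 : E (ext a fun _ => true) <;> by_cases h2 : F (ext (fun _ => true) b) <;>
      simp [h1, h2, e1, e2]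
  have rhsE : ∑ a, ∑ b, (if E (ext a b) then WA a * WB b else 0)
      = (∑ a, if E (ext a (fun _ => true)) then WA a else 0) := by
    calc ∑ a, ∑ b, (if E (ext a b) then WA a * WB b else 0)
        = ∑ a, (if E (ext a fun _ => true) then WA a else 0) * (∑ b, WB b) := by
          refine Finset.sum_congr rfl fun a _ => ?_
          rw [Finset.mul_sum]
          refine Finset.sum_congr rfl fun b _ => ?_
          have e1 := hEiff a b
          by_cases h1 : E (ext a fun _ => true) <;> simp [h1, e1]
      _ = _ := by
          refine Finset.sum_congr rfl fun a _ => ?_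
          rw [hB1, mul_one]
  have rhsF : ∑ a, ∑ b, (if F (ext a b) then WA a * WB b else 0)
      = (∑ b, if F (ext (fun _ => true) b) then WB b else 0) := by
    calc ∑ a, ∑ b, (if F (ext a b) then WA a * WB b else 0)
        = ∑ a, WA a * (∑ b, if F (ext (fun _ => true) b) then WB b else 0) := by
          refine Finset.sum_congr rfl fun a _ => ?_
          rw [Finset.mul_sum]
          refine Finset.sum_congr rfl fun b _ => ?_
          have e2 := hFiff a b
          by_cases h2 : F (ext (fun _ => true) b) <;> simp [h2, e2]
      _ = _ := by rw [← Finset.sum_mul, hA1, one_mul]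
  rw [rhsE, rhsF]
  convert lhs using 4

end Aux

section Main
variable {α : Type*} [Fintype α] [DecidableEq α]

lemma pr_inter (p : ℝ) : ∀ (k : ℕ) (A : Fin k → Finset α),
    (∀ i j : Fin k, i ≠ j → Disjoint (A i) (A j)) →
    pr p (fun g => ∀ j, ∃ v ∈ A j, g v = false) = ∏ j, (1 - p ^ (A j).card) := by
  intro k
  induction k with
  | zero =>
    intro A _
    rw [pr_congr (F := fun _ => True) fun g => ⟨fun _ => trivial, fun _ j => j.elim0⟩, pr_true]
    simp
  | succ k ih =>
    intro A hd
    rw [pr_congr (F := fun g => (∃ v ∈ A 0, g v = false) ∧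
        ∀ j : Fin k, ∃ v ∈ A j.succ, g v = false) fun g => by
      constructor
      · intro h; exact ⟨h 0, fun j => h j.succ⟩
      · rintro ⟨h0, hrest⟩ j
        rcases Fin.eq_zero_or_eq_succ j with rfl | ⟨i, rfl⟩
        · exact h0
        · exact hrest i]
    rw [pr_indep_mul (A 0)
      (fun g => ∃ v ∈ A 0, g v = false)
      (fun g => ∀ j : Fin k, ∃ v ∈ A j.succ, g v = false)
      (fun g g' hgg => by
        constructor
        · rintro ⟨v, hv, hf⟩; exact ⟨v, hv, (hgg v hv).symm ▸ hf⟩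
        · rintro ⟨v, hv, hf⟩; exact ⟨v, hv, (hgg v hv) ▸ hf⟩)
      (fun g g' hgg => by
        have hout : ∀ (j : Fin k) (v : α), v ∈ A j.succ → v ∉ A 0 := fun j v hv =>
          Finset.disjoint_left.mp (hd j.succ 0 (Fin.succ_ne_zero j)) hv
        constructor
        · rintro h j
          obtain ⟨v, hv, hf⟩ := h j
          exact ⟨v, hv, (hgg v (hout j v hv)).symm ▸ hf⟩
        · rintro h j
          obtain ⟨v, hv, hf⟩ := h j
          exact ⟨v, hv, (hgg v (hout j v hv)) ▸ hf⟩)]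
    have h0 : pr p (fun g : α → Bool => ∃ v ∈ A 0, g v = false) = 1 - p ^ (A 0).card := by
      have hcompl := pr_add_compl (p := p) (E := fun g : α → Bool => ∃ v ∈ A 0, g v = false)
      have heq : pr p (fun g : α → Bool => ¬ ∃ v ∈ A 0, g v = false)
          = pr p (fun g : α → Bool => ∀ v ∈ A 0, g v = true) := by
        refine pr_congr fun g => ?_
        push_neg
        exact forall₂_congr fun v _ => by simp
      rw [heq, pr_allblue] at hcompl
      linarith
    rw [h0, ih (fun j => A j.succ) (fun i j hij => hd i.succ j.succ
      (fun h => hij (Fin.succ_injective _ h)))]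
    rw [Fin.prod_univ_succ]

end Main

/-- If `V'_1, …, V'_k` are pairwise disjoint b-eternal sets in the (biased) majority
model and `s = max_j |V'_j|`, then under the random initial coloring the probability
that the process ever reaches an all-red generation is at most `exp(-k p_b^s)`. -/
theorem stmt3 {V : Type*} [Fintype V] [DecidableEq V] (G : SimpleGraph V)
    [DecidableRel G.Adj] (step : (V → Bool) → (V → Bool))
    (hstep : step = majStep G ∨ step = bmajStep G)
    (k s : ℕ) (A : Fin k → Finset V)
    (hdisj : ∀ i j : Fin k, i ≠ j → Disjoint (A i) (A j))
    (hs : s = Finset.univ.sup fun j : Fin k => (A j).card)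
    (heternal : ∀ j : Fin k, ∀ g : V → Bool, (∀ v ∈ A j, g v = true) →
      ∀ t : ℕ, ∃ v, (step^[t] g) v = true)
    (p : ℝ) (hp0 : 0 ≤ p) (hp1 : p ≤ 1) :
    pr p (fun g => ∃ t : ℕ, ∀ v, (step^[t] g) v = false) ≤
      Real.exp (-(k : ℝ) * p ^ s) := by
  have himp : ∀ g : V → Bool, (∃ t : ℕ, ∀ v, (step^[t] g) v = false) →
      ∀ j : Fin k, ∃ v ∈ A j, g v = false := by
    rintro g ⟨t, ht⟩ j
    by_contra hcon
    push_neg at hcon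
    have hblue : ∀ v ∈ A j, g v = true := fun v hv => by
      have := hcon v hv; simpa using this
    obtain ⟨v, hv⟩ := heternal j g hblue t
    rw [ht v] at hv
    exact Bool.false_ne_true hv
  have hps1 : p ^ s ≤ 1 := pow_le_one₀ hp0 hp1
  calc pr p (fun g => ∃ t : ℕ, ∀ v, (step^[t] g) v = false)
      ≤ pr p (fun g => ∀ j : Fin k, ∃ v ∈ A j, g v = false) := pr_mono hp0 hp1 himp
    _ = ∏ j : Fin k, (1 - p ^ (A j).card) := pr_inter p k A hdisj
    _ ≤ ∏ j : Fin k, (1 - p ^ s) := by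
        refine Finset.prod_le_prod (fun j _ => ?_) (fun j _ => ?_)
        · have := pow_le_one₀ hp0 hp1 (n := (A j).card); linarith
        · have hcard : (A j).card ≤ s := hs ▸ Finset.le_sup (f := fun j : Fin k => (A j).card) (Finset.mem_univ j)
          have := pow_le_pow_of_le_one hp0 hp1 hcard
          linarith
    _ = (1 - p ^ s) ^ k := by rw [Finset.prod_const, Finset.card_fin]
    _ ≤ (Real.exp (-(p ^ s))) ^ k := by
        refine pow_le_pow_left₀ (by linarith) ?_ k
        have := Real.add_one_le_exp (-(p ^ s))
        linarith
    _ = Real.exp (-(k : ℝ) * p ^ s) := by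
        rw [← Real.exp_nat_mul]
        ring_nf
end

section
/- For any finite graph G=(V,E) and any initial two-coloring, the majority model dynamics (synchronous majority update with ties conserving the current color) eventually reaches a cycle of configurations of length one or two. -/
open scoped Classical

section Aux

variable {V : Type*} [Fintype V] [DecidableEq V] (G : SimpleGraph V) [DecidableRel G.Adj]

/-- Number of neighbors of `v` whose color (under `g`) differs from `c`. -/
def cnt (g : V → Bool) (c : Bool) (v : V) : ℕ :=
  ((G.neighborFinset v).filter fun u => g u ≠ c).card

lemma cnt_true (g : V → Bool) (v : V) : cnt G g true v = redCount G g v := by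
  simp [cnt, redCount]

lemma cnt_false (g : V → Bool) (v : V) : cnt G g false v = blueCount G g v := by
  simp [cnt, blueCount]

lemma cnt_maj_le (g : V → Bool) (v : V) (c : Bool) :
    cnt G g (majStep G g v) v ≤ cnt G g c v := by
  have h1 := cnt_true G g v
  have h0 := cnt_false G g v
  unfold majStep
  split_ifs with h h' <;> cases c <;> cases hv : g v <;> simp_all <;> omega

lemma cnt_maj_eq (g : V → Bool) (v : V) (c : Bool)
    (h : cnt G g (majStep G g v) v = cnt G g c v) :
    majStep G g v = c ∨ majStep G g v = g v := by
  by_cases hc : majStep G g v = c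
  · exact Or.inl hc
  · right
    have h1 := cnt_true G g v
    have h0 := cnt_false G g v
    have hrb : redCount G g v = blueCount G g v := by
      cases hm : majStep G g v <;> cases hcc : c <;> simp_all
    unfold majStep
    simp [hrb]

/-- The energy: over all (ordered) adjacent pairs, count of disagreements
between `a` at the tail and `b` at the head. -/
def en (a b : V → Bool) : ℕ := ∑ v, cnt G a (b v) v

lemma cnt_eq_sum (a : V → Bool) (c : Bool) (v : V) :
    cnt G a c v = ∑ u, if G.Adj v u ∧ a u ≠ c then 1 else 0 := by
  rw [cnt, Finset.card_filter, SimpleGraph.neighborFinset_eq_filter,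
    Finset.sum_filter]
  apply Finset.sum_congr rfl
  intro u _
  by_cases hadj : G.Adj v u <;> by_cases hne : a u ≠ c <;> simp [hadj, hne]

lemma en_symm (a b : V → Bool) : en G a b = en G b a := by
  simp only [en, cnt_eq_sum]
  rw [Finset.sum_comm]
  refine Finset.sum_congr rfl fun x _ => Finset.sum_congr rfl fun y _ => ?_
  refine if_congr ?_ rfl rfl
  constructor
  · rintro ⟨hadj, hne⟩; exact ⟨hadj.symm, hne.symm⟩
  · rintro ⟨hadj, hne⟩; exact ⟨hadj.symm, hne.symm⟩

end Aux

/-- On any finite graph, the majority dynamics eventually reaches a cycle of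
configurations of length one or two. -/
theorem stmt5 {V : Type*} [Fintype V] [DecidableEq V] (G : SimpleGraph V)
    [DecidableRel G.Adj] (g : V → Bool) :
    ∃ N : ℕ, (majStep G)^[N + 2] g = (majStep G)^[N] g := by
  set x : ℕ → V → Bool := fun n => (majStep G)^[n] g with hxdef
  have hx1 : ∀ n, x (n + 1) = majStep G (x n) := fun n =>
    Function.iterate_succ_apply' (majStep G) n g
  have hxadd : ∀ m k, x (m + k) = (majStep G)^[k] (x m) := by
    intro m k
    simp only [hxdef]
    rw [Nat.add_comm, Function.iterate_add_apply]
  -- eventual periodicity from finiteness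
  obtain ⟨i, j, hij, hx_eq⟩ : ∃ i j : ℕ, i ≠ j ∧ x i = x j :=
    Finite.exists_ne_map_eq_of_infinite x
  obtain ⟨a, p, hp, hper0⟩ : ∃ a p : ℕ, 0 < p ∧ x (a + p) = x a := by
    rcases hij.lt_or_gt with h | h
    · exact ⟨i, j - i, by omega, by rw [show i + (j - i) = j by omega]; exact hx_eq.symm⟩
    · exact ⟨j, i - j, by omega, by rw [show j + (i - j) = i by omega]; exact hx_eq⟩
  have hper : ∀ s, a ≤ s → x (s + p) = x s := by
    intro s hs
    obtain ⟨k, rfl⟩ := Nat.exists_eq_add_of_le hs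
    rw [show a + k + p = (a + p) + k by ring, hxadd, hper0, ← hxadd]
  -- the energy along the trajectory
  set e : ℕ → ℕ := fun t => en G (x t) (x (t + 1)) with hedef
  have hle : ∀ t v, cnt G (x (t + 1)) (x (t + 2) v) v ≤ cnt G (x (t + 1)) (x t v) v := by
    intro t v
    have h2 : x (t + 2) v = majStep G (x (t + 1)) v := by rw [hx1 (t + 1)]
    rw [h2]
    exact cnt_maj_le G (x (t + 1)) v (x t v)
  have hstep : ∀ t, e (t + 1) ≤ e t := by
    intro t
    have h1 : e (t + 1) = ∑ v, cnt G (x (t + 1)) (x (t + 2) v) v := rfl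
    have h2 : e t = ∑ v, cnt G (x (t + 1)) (x t v) v := by
      simp only [hedef]
      rw [en_symm]
      rfl
    rw [h1, h2]
    exact Finset.sum_le_sum fun v _ => hle t v
  have hmono : ∀ m n, m ≤ n → e n ≤ e m := by
    intro m n h
    induction n, h using Nat.le_induction with
    | base => exact le_rfl
    | succ n hmn ih => exact (hstep n).trans ih
  have heconst : ∀ s, a ≤ s → e (s + 1) = e s := by
    intro s hs
    have h1 : e (s + p) ≤ e (s + 1) := hmono _ _ (by omega)
    have h2 : e (s + 1) ≤ e s := hstep s
    have h3 : e (s + p) = e s := by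
      simp only [hedef]
      rw [show s + p + 1 = s + 1 + p by ring, hper s hs, hper (s + 1) (by omega)]
    omega
  -- pointwise equality from energy constancy
  have hpt : ∀ s, a ≤ s → ∀ v,
      cnt G (x (s + 1)) (x (s + 2) v) v = cnt G (x (s + 1)) (x s v) v := by
    intro s hs v
    have hsum : (∑ v, cnt G (x (s + 1)) (x (s + 2) v) v)
        = ∑ v, cnt G (x (s + 1)) (x s v) v := by
      have h1 : e (s + 1) = ∑ v, cnt G (x (s + 1)) (x (s + 2) v) v := rfl
      have h2 : e s = ∑ v, cnt G (x (s + 1)) (x s v) v := by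
        simp only [hedef]
        rw [en_symm]
        rfl
      rw [← h1, ← h2, heconst s hs]
    exact ((Finset.sum_eq_sum_iff_of_le fun v _ => hle s v).mp hsum) v (Finset.mem_univ v)
  have hdich : ∀ s, a ≤ s → ∀ v, x (s + 2) v = x s v ∨ x (s + 2) v = x (s + 1) v := by
    intro s hs v
    have h2 : x (s + 2) v = majStep G (x (s + 1)) v := by rw [hx1 (s + 1)]
    have := cnt_maj_eq G (x (s + 1)) v (x s v) (by rw [← h2]; exact hpt s hs v)
    rw [h2]
    exact this
  have hconst : ∀ s, a ≤ s → ∀ v, x (s + 1) v = x s v → x (s + 2) v = x (s + 1) v := by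
    intro s hs v h
    rcases hdich s hs v with h' | h'
    · exact h'.trans h.symm
    · exact h'
  -- conclusion
  refine ⟨a, ?_⟩
  show x (a + 2) = x a
  funext v
  by_contra hne
  rcases hdich a le_rfl v with h | h
  · exact hne h
  -- x (a+2) v = x (a+1) v ≠ x a v; show the value of v is constant from a+1 on
  have hR : ∀ k, x (a + 2 + k) v = x (a + 1 + k) v := by
    intro k
    induction k with
    | zero => exact h
    | succ k ih =>
      have ih' : x (a + 1 + k + 1) v = x (a + 1 + k) v := by
        rw [show a + 1 + k + 1 = a + 2 + k by ring]; exact ih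
      have := hconst (a + 1 + k) (by omega) v ih'
      rw [show a + 2 + (k + 1) = a + 1 + k + 2 by ring,
        show a + 1 + (k + 1) = a + 1 + k + 1 by ring]
      exact this
  have hC : ∀ k, x (a + 1 + k) v = x (a + 1) v := by
    intro k
    induction k with
    | zero => rfl
    | succ k ih =>
      have := hR k
      rw [show a + 1 + (k + 1) = a + 2 + k by ring]
      exact this.trans ih
  have h1 : x (a + p) v = x (a + 1) v := by
    have := hC (p - 1)
    rwa [show a + 1 + (p - 1) = a + p by omega] at this
  have h2 : x (a + p) v = x a v := by rw [hper a le_rfl]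
  exact hne (h.trans (h1.symm.trans h2 ▸ rfl :  x (a + 1) v = x a v))
end

section
/- For any finite graph G=(V,E) and any initial two-coloring, the biased majority model dynamics (synchronous majority update where ties always become blue) eventually reaches a cycle of configurations of length one or two. -/
open scoped Classical

section Aux

variable {V : Type*} [Fintype V] [DecidableEq V] (G : SimpleGraph V) [DecidableRel G.Adj]

/-- ±1 encoding of a configuration. -/
def Xv (g : V → Bool) (v : V) : ℤ := if g v then 1 else -1

/-- Signed neighborhood sum. -/
def Sv (g : V → Bool) (v : V) : ℤ := ∑ u ∈ G.neighborFinset v, Xv g u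

lemma Sv_eq (g : V → Bool) (v : V) :
    Sv G g v = (blueCount G g v : ℤ) - (redCount G g v : ℤ) := by
  classical
  unfold Sv Xv blueCount redCount
  rw [← Finset.sum_filter_add_sum_filter_not (G.neighborFinset v) (fun u => g u = true)]
  have h1 : ∑ u ∈ (G.neighborFinset v).filter (fun u => g u = true),
      (if g u then (1:ℤ) else -1)
      = ((G.neighborFinset v).filter fun u => g u = true).card := by
    rw [Finset.sum_congr rfl (g := fun _ => (1:ℤ)) (fun u hu => by
      simp only [Finset.mem_filter] at hu; simp [hu.2])]
    simp
  have h2 : ∑ u ∈ (G.neighborFinset v).filter (fun u => ¬ g u = true),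
      (if g u then (1:ℤ) else -1)
      = -(((G.neighborFinset v).filter fun u => g u = false).card : ℤ) := by
    have hf : (G.neighborFinset v).filter (fun u => ¬ g u = true)
        = (G.neighborFinset v).filter (fun u => g u = false) := by
      apply Finset.filter_congr; intro u _; simp
    rw [hf, Finset.sum_congr rfl (g := fun _ => (-1:ℤ)) (fun u hu => by
      simp only [Finset.mem_filter] at hu; simp [hu.2])]
    simp
  rw [h1, h2]; ring

lemma bmaj_iff (g : V → Bool) (v : V) :
    bmajStep G g v = true ↔ 0 ≤ Sv G g v := by
  rw [bmajStep, decide_eq_true_iff, Sv_eq]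
  omega

/-- Per-vertex key inequality. -/
lemma keyT (g h : V → Bool) (v : V) :
    (if bmajStep G g v = h v then (0:ℤ) else 2) ≤
      (Xv (bmajStep G g) v - Xv h v) * (2 * Sv G g v + 1) := by
  have hb := bmaj_iff G g v
  unfold Xv
  cases hbm : bmajStep G g v <;> cases hh : h v
  · simp [hbm, hh]
  · rw [if_neg (by simp [hbm, hh])]
    have hs : Sv G g v ≤ -1 := by
      by_contra hcon
      exact absurd (hb.mpr (by omega)) (by simp [hbm])
    norm_num
    nlinarith
  · rw [if_neg (by simp [hbm, hh])]
    have hs : 0 ≤ Sv G g v := hb.mp hbm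
    norm_num
    nlinarith
  · simp [hbm, hh]

lemma neighborFinset_eq (v : V) :
    G.neighborFinset v = Finset.univ.filter (G.Adj v) := by
  ext u; simp

lemma sym (g h : V → Bool) :
    ∑ v, Xv g v * Sv G h v = ∑ v, Xv h v * Sv G g v := by
  unfold Sv
  simp_rw [neighborFinset_eq, Finset.mul_sum, Finset.sum_filter]
  rw [Finset.sum_comm]
  apply Finset.sum_congr rfl; intro v _
  apply Finset.sum_congr rfl; intro u _
  simp only [G.adj_comm u v, mul_comm (Xv g u) (Xv h v)]

/-- The Goles–Olivos energy function. -/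
def En (g : V → Bool) : ℤ :=
  -(∑ v, Xv (bmajStep G g) v * (2 * Sv G g v + 1)) - ∑ v, Xv g v

lemma expand (a b : V → Bool) :
    ∑ v, Xv a v * (2 * Sv G b v + 1)
      = 2 * (∑ v, Xv a v * Sv G b v) + ∑ v, Xv a v := by
  rw [Finset.mul_sum, ← Finset.sum_add_distrib]
  apply Finset.sum_congr rfl; intros; ring

lemma En_diff (g : V → Bool) :
    En G g - En G (bmajStep G g) =
      ∑ v, (Xv (bmajStep G (bmajStep G g)) v - Xv g v) * (2 * Sv G (bmajStep G g) v + 1) := by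
  have h1 := expand G (bmajStep G g) g
  have h2 := expand G (bmajStep G (bmajStep G g)) (bmajStep G g)
  have h3 := expand G g (bmajStep G g)
  have hs := sym G (bmajStep G g) g
  have h4 : ∑ v, (Xv (bmajStep G (bmajStep G g)) v - Xv g v) * (2 * Sv G (bmajStep G g) v + 1)
      = (∑ v, Xv (bmajStep G (bmajStep G g)) v * (2 * Sv G (bmajStep G g) v + 1))
        - ∑ v, Xv g v * (2 * Sv G (bmajStep G g) v + 1) := by
    rw [← Finset.sum_sub_distrib]
    apply Finset.sum_congr rfl; intros; ring
  unfold En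
  linarith

lemma term_nonneg (g : V → Bool) (v : V) :
    (0:ℤ) ≤ (Xv (bmajStep G (bmajStep G g)) v - Xv g v) * (2 * Sv G (bmajStep G g) v + 1) := by
  refine le_trans ?_ (keyT G (bmajStep G g) g v)
  split_ifs <;> norm_num

lemma En_step_le (g : V → Bool) : En G (bmajStep G g) ≤ En G g := by
  have h := En_diff G g
  have h0 : (0:ℤ) ≤ ∑ v, (Xv (bmajStep G (bmajStep G g)) v - Xv g v)
      * (2 * Sv G (bmajStep G g) v + 1) :=
    Finset.sum_nonneg fun v _ => term_nonneg G g v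
  linarith

lemma En_step_lt (g : V → Bool) (hne : bmajStep G (bmajStep G g) ≠ g) :
    En G (bmajStep G g) < En G g := by
  have h := En_diff G g
  obtain ⟨v, hv⟩ := Function.ne_iff.mp hne
  have hpos : (0:ℤ) < ∑ v, (Xv (bmajStep G (bmajStep G g)) v - Xv g v)
      * (2 * Sv G (bmajStep G g) v + 1) := by
    refine Finset.sum_pos' (fun u _ => term_nonneg G g u) ⟨v, Finset.mem_univ v, ?_⟩
    refine lt_of_lt_of_le ?_ (keyT G (bmajStep G g) g v)
    rw [if_neg hv]; norm_num
  linarith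

end Aux

/-- On any finite graph, the biased majority dynamics (ties become blue) eventually
reaches a cycle of configurations of length one or two. -/
theorem stmt6 {V : Type*} [Fintype V] [DecidableEq V] (G : SimpleGraph V)
    [DecidableRel G.Adj] (g : V → Bool) :
    ∃ N : ℕ, (bmajStep G)^[N + 2] g = (bmajStep G)^[N] g := by
  classical
  by_contra hc
  push_neg at hc
  set f := bmajStep G with hf
  have hstep : ∀ n : ℕ, En G (f^[n+1] g) < En G (f^[n] g) := by
    intro n
    have h1 : f^[n+1] g = f (f^[n] g) := Function.iterate_succ_apply' f n g
    have h2 : f^[n+2] g = f (f (f^[n] g)) := by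
      rw [Function.iterate_succ_apply' f (n+1) g, Function.iterate_succ_apply' f n g]
    rw [h1]
    refine En_step_lt G _ ?_
    rw [← hf, ← h2]
    exact hc n
  have hdec : ∀ n : ℕ, En G (f^[n] g) ≤ En G g - n := by
    intro n
    induction n with
    | zero => simp
    | succ k ih =>
      have := hstep k
      push_cast
      push_cast at ih
      linarith
  have hne : ((Finset.univ : Finset (V → Bool)).image (En G)).Nonempty :=
    Finset.image_nonempty.mpr Finset.univ_nonempty
  set B := ((Finset.univ : Finset (V → Bool)).image (En G)).min' hne with hB
  have hBle : ∀ h : V → Bool, B ≤ En G h := fun h =>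
    Finset.min'_le _ _ (Finset.mem_image_of_mem _ (Finset.mem_univ h))
  set n := (En G g - B + 1).toNat with hn
  have h1 : B ≤ En G (f^[n] g) := hBle _
  have h2 : En G (f^[n] g) ≤ En G g - n := hdec n
  have h3 : En G g - B + 1 ≤ (n : ℤ) := Int.self_le_toNat _
  linarith
end

section
/- For any finite graph G=(V,E), the consensus time of the majority model (the number of steps until the trajectory enters its eventual periodic cycle) is at most |E|, for every initial configuration. -/
open scoped Classical

/-! ### Auxiliary development for the Poljak–Turzík style energy argument -/

/-- `±1` value of a colour. -/
def pmVal (b : Bool) : ℤ := if b then 1 else -1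

lemma pmVal_abs (b : Bool) : |pmVal b| = 1 := by cases b <;> simp [pmVal]

lemma pmVal_sq (b : Bool) : pmVal b * pmVal b = 1 := by cases b <;> simp [pmVal]

lemma pmVal_of_ne {a b : Bool} (h : a ≠ b) : pmVal a = -pmVal b := by
  cases a <;> cases b <;> simp_all [pmVal]

/-- The (integer) field seen by vertex `v`: sum of `±1` values of its neighbours,
plus a self-loop contribution when the degree is even (modelling tie-keeping). -/
def fld {V : Type*} [Fintype V] [DecidableEq V] (G : SimpleGraph V)
    [DecidableRel G.Adj] (g : V → Bool) (v : V) : ℤ :=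
  (∑ u ∈ G.neighborFinset v, pmVal (g u)) +
    (if Even (G.degree v) then pmVal (g v) else 0)

lemma count_deg {V : Type*} [Fintype V] [DecidableEq V] (G : SimpleGraph V)
    [DecidableRel G.Adj] (g : V → Bool) (v : V) :
    blueCount G g v + redCount G g v = G.degree v := by
  classical
  have h0 := Finset.card_filter_add_card_filter_not
    (s := G.neighborFinset v) (p := fun u => g u = true)
  have h2 : (G.neighborFinset v).filter (fun u => ¬ (g u = true))
      = (G.neighborFinset v).filter (fun u => g u = false) := by
    apply Finset.filter_congr; intro u _; simp
  rw [h2] at h0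
  unfold blueCount redCount
  rw [SimpleGraph.degree, ← h0]

lemma nsum_eq {V : Type*} [Fintype V] [DecidableEq V] (G : SimpleGraph V)
    [DecidableRel G.Adj] (g : V → Bool) (v : V) :
    (∑ u ∈ G.neighborFinset v, pmVal (g u)) =
      (blueCount G g v : ℤ) - (redCount G g v : ℤ) := by
  classical
  rw [← Finset.sum_filter_add_sum_filter_not (G.neighborFinset v) (fun u => g u = true)]
  have h1 : (∑ u ∈ (G.neighborFinset v).filter (fun u => g u = true), pmVal (g u))
      = (blueCount G g v : ℤ) := by
    calc (∑ u ∈ (G.neighborFinset v).filter (fun u => g u = true), pmVal (g u))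
        = ∑ _u ∈ (G.neighborFinset v).filter (fun u => g u = true), (1 : ℤ) :=
          Finset.sum_congr rfl (fun u hu => by
            have := (Finset.mem_filter.1 hu).2
            simp [pmVal, this])
      _ = (blueCount G g v : ℤ) := by simp [blueCount]
  have h2 : (∑ u ∈ (G.neighborFinset v).filter (fun u => ¬ (g u = true)), pmVal (g u))
      = -(redCount G g v : ℤ) := by
    have hfe : (G.neighborFinset v).filter (fun u => ¬ (g u = true))
        = (G.neighborFinset v).filter (fun u => g u = false) := by
      apply Finset.filter_congr; intro u _; simp
    calc (∑ u ∈ (G.neighborFinset v).filter (fun u => ¬ (g u = true)), pmVal (g u))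
        = ∑ _u ∈ (G.neighborFinset v).filter (fun u => ¬ (g u = true)), (-1 : ℤ) :=
          Finset.sum_congr rfl (fun u hu => by
            have := (Finset.mem_filter.1 hu).2
            simp only [Bool.not_eq_true] at this
            simp [pmVal, this])
      _ = -(redCount G g v : ℤ) := by rw [hfe]; simp [redCount]
  rw [h1, h2]
  ring

/-- The new colour of a vertex agrees with the sign of its field, which is a nonzero
odd integer; hence the product is at least 1. -/
lemma key1 {V : Type*} [Fintype V] [DecidableEq V] (G : SimpleGraph V)
    [DecidableRel G.Adj] (g : V → Bool) (v : V) :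
    1 ≤ pmVal (majStep G g v) * fld G g v := by
  classical
  have hd := count_deg G g v
  have hs := nsum_eq G g v
  have hpm1 : -1 ≤ pmVal (g v) := by cases g v <;> simp [pmVal]
  have hpm2 : pmVal (g v) ≤ 1 := by cases g v <;> simp [pmVal]
  rcases lt_trichotomy (redCount G g v) (blueCount G g v) with h1 | h1 | h1
  · have hmaj : majStep G g v = true := by unfold majStep; rw [if_pos h1]
    rw [hmaj, show pmVal true = 1 from rfl, one_mul]
    unfold fld; rw [hs]
    by_cases he : Even (G.degree v)
    · rw [if_pos he]
      have heN : Even (blueCount G g v + redCount G g v) := by rw [hd]; exact he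
      obtain ⟨k, hk⟩ := heN
      have h2 : (2 : ℤ) ≤ (blueCount G g v : ℤ) - redCount G g v := by omega
      linarith
    · rw [if_neg he]
      have h2 : (1 : ℤ) ≤ (blueCount G g v : ℤ) - redCount G g v := by omega
      linarith
  · have he : Even (G.degree v) := by
      rw [← hd]; exact ⟨redCount G g v, by omega⟩
    have hmaj : majStep G g v = g v := by
      unfold majStep; rw [if_neg (by omega), if_neg (by omega)]
    rw [hmaj]
    unfold fld; rw [hs, if_pos he]
    have h0 : (blueCount G g v : ℤ) - redCount G g v = 0 := by omega
    rw [h0, zero_add, pmVal_sq]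
  · have hmaj : majStep G g v = false := by
      unfold majStep; rw [if_neg (by omega), if_pos h1]
    rw [hmaj, show pmVal false = -1 from rfl]
    unfold fld; rw [hs]
    by_cases he : Even (G.degree v)
    · rw [if_pos he]
      have heN : Even (blueCount G g v + redCount G g v) := by rw [hd]; exact he
      obtain ⟨k, hk⟩ := heN
      have h2 : (blueCount G g v : ℤ) - redCount G g v ≤ -2 := by omega
      linarith
    · rw [if_neg he]
      have h2 : (blueCount G g v : ℤ) - redCount G g v ≤ -1 := by omega
      linarith

lemma key2 {V : Type*} [Fintype V] [DecidableEq V] (G : SimpleGraph V)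
    [DecidableRel G.Adj] (g : V → Bool) (h : V → Bool) (v : V) :
    pmVal (h v) * fld G g v + (if h v = majStep G g v then 0 else 2)
      ≤ pmVal (majStep G g v) * fld G g v := by
  by_cases hc : h v = majStep G g v
  · simp [hc]
  · rw [if_neg hc, pmVal_of_ne hc]
    have := key1 G g v
    linarith

lemma fld_upper {V : Type*} [Fintype V] [DecidableEq V] (G : SimpleGraph V)
    [DecidableRel G.Adj] (g : V → Bool) (h : V → Bool) (v : V) :
    pmVal (h v) * fld G g v ≤ (G.degree v : ℤ) + 1 := by
  have h1 : pmVal (h v) * fld G g v ≤ |fld G g v| := by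
    calc pmVal (h v) * fld G g v ≤ |pmVal (h v) * fld G g v| := le_abs_self _
    _ = |fld G g v| := by rw [abs_mul, pmVal_abs, one_mul]
  refine h1.trans ?_
  unfold fld
  calc |(∑ u ∈ G.neighborFinset v, pmVal (g u)) +
      (if Even (G.degree v) then pmVal (g v) else 0)|
      ≤ |∑ u ∈ G.neighborFinset v, pmVal (g u)| +
        |(if Even (G.degree v) then pmVal (g v) else 0)| := abs_add_le _ _
    _ ≤ (∑ u ∈ G.neighborFinset v, |pmVal (g u)|) + 1 := by
        gcongr
        · exact Finset.abs_sum_le_sum_abs _ _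
        · split
          · rw [pmVal_abs]
          · simp
    _ = (G.degree v : ℤ) + 1 := by
        simp [pmVal_abs, SimpleGraph.card_neighborFinset_eq_degree]

/-- Symmetry of the interaction matrix. -/
lemma symm_sum {V : Type*} [Fintype V] [DecidableEq V] (G : SimpleGraph V)
    [DecidableRel G.Adj] (a b : V → Bool) :
    ∑ v, pmVal (a v) * fld G b v = ∑ v, pmVal (b v) * fld G a v := by
  classical
  have hnf : ∀ (c : V → Bool) (v : V),
      (∑ u ∈ G.neighborFinset v, pmVal (c u)) =
        ∑ u, (if G.Adj v u then pmVal (c u) else 0) := by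
    intro c v
    rw [← Finset.sum_filter]
    congr 1
    ext u
    simp [SimpleGraph.mem_neighborFinset]
  have expand : ∀ (x y : V → Bool),
      ∑ v, pmVal (x v) * fld G y v =
        (∑ v, ∑ u, (if G.Adj v u then pmVal (x v) * pmVal (y u) else 0)) +
          ∑ v, (if Even (G.degree v) then pmVal (x v) * pmVal (y v) else 0) := by
    intro x y
    unfold fld
    rw [← Finset.sum_add_distrib]
    apply Finset.sum_congr rfl
    intro v _
    rw [mul_add, hnf, Finset.mul_sum]
    congr 1
    · apply Finset.sum_congr rfl
      intro u _
      split <;> simp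
    · split <;> simp
  rw [expand, expand]
  congr 1
  · rw [Finset.sum_comm]
    apply Finset.sum_congr rfl
    intro v _
    apply Finset.sum_congr rfl
    intro u _
    by_cases hadj : G.Adj u v
    · rw [if_pos hadj, if_pos hadj.symm]; ring
    · rw [if_neg hadj, if_neg (fun hc => hadj hc.symm)]
  · apply Finset.sum_congr rfl
    intro v _
    split <;> ring

/-- The energy. -/
def energy {V : Type*} [Fintype V] [DecidableEq V] (G : SimpleGraph V)
    [DecidableRel G.Adj] (g : V → Bool) : ℤ :=
  ∑ v, pmVal (majStep G g v) * fld G g v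

lemma energy_lb {V : Type*} [Fintype V] [DecidableEq V] (G : SimpleGraph V)
    [DecidableRel G.Adj] (g : V → Bool) :
    (Fintype.card V : ℤ) ≤ energy G g := by
  have : ∑ v, (1 : ℤ) ≤ energy G g := Finset.sum_le_sum (fun v _ => key1 G g v)
  simpa using this

lemma energy_ub {V : Type*} [Fintype V] [DecidableEq V] (G : SimpleGraph V)
    [DecidableRel G.Adj] [DecidableEq (Sym2 V)] (g : V → Bool) :
    energy G g ≤ 2 * (G.edgeFinset.card : ℤ) + Fintype.card V := by
  have h1 : energy G g ≤ ∑ v, ((G.degree v : ℤ) + 1) :=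
    Finset.sum_le_sum (fun v _ => fld_upper G g _ v)
  refine h1.trans ?_
  rw [Finset.sum_add_distrib]
  have h2 : (∑ v, (G.degree v : ℤ)) = 2 * (G.edgeFinset.card : ℤ) := by
    exact_mod_cast G.sum_degrees_eq_twice_card_edges
  rw [h2]
  simp

lemma energy_gain {V : Type*} [Fintype V] [DecidableEq V] (G : SimpleGraph V)
    [DecidableRel G.Adj] (g : V → Bool)
    (hne : majStep G (majStep G g) ≠ g) :
    energy G g + 2 ≤ energy G (majStep G g) := by
  classical
  obtain ⟨v₀, hv₀⟩ := Function.ne_iff.1 hne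
  have step1 : ∑ v, (pmVal (g v) * fld G (majStep G g) v +
        (if g v = majStep G (majStep G g) v then 0 else 2))
      ≤ energy G (majStep G g) :=
    Finset.sum_le_sum (fun v _ => key2 G (majStep G g) g v)
  rw [Finset.sum_add_distrib] at step1
  have step2 : (2 : ℤ) ≤ ∑ v, (if g v = majStep G (majStep G g) v then 0 else 2) := by
    have hv : (if g v₀ = majStep G (majStep G g) v₀ then (0:ℤ) else 2) = 2 := by
      rw [if_neg (fun hc => hv₀ hc.symm)]
    calc (2 : ℤ) = (if g v₀ = majStep G (majStep G g) v₀ then (0:ℤ) else 2) := hv.symm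
      _ ≤ _ := Finset.single_le_sum (f := fun v => if g v = majStep G (majStep G g) v
            then (0:ℤ) else 2) (fun v _ => by
            by_cases hc : g v = majStep G (majStep G g) v <;> simp [hc]) (Finset.mem_univ v₀)
  have step3 : ∑ v, pmVal (g v) * fld G (majStep G g) v = energy G g := by
    rw [symm_sum]; rfl
  linarith

/-- For any finite graph, from every initial configuration the majority-model trajectory
has entered its eventual periodic cycle (of length one or two) after at most |E| steps. -/
theorem stmt7 {V : Type*} [Fintype V] [DecidableEq V] (G : SimpleGraph V)
    [DecidableRel G.Adj] [DecidableEq (Sym2 V)] (g : V → Bool) :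
    (majStep G)^[G.edgeFinset.card + 2] g = (majStep G)^[G.edgeFinset.card] g := by
  classical
  set m := G.edgeFinset.card with hm
  by_contra hcon
  set f := majStep G with hf
  -- every step up to m is a genuine flip step
  have hstep : ∀ t, t ≤ m → majStep G (majStep G (f^[t] g)) ≠ f^[t] g := by
    intro t ht heq
    apply hcon
    have e1 : f^[t + 2] g = f^[t] g := by
      rw [show t + 2 = 2 + t by omega, Function.iterate_add_apply]
      exact heq
    have e2 : f^[m + 2] g = f^[m] g := by
      have h3 : m + 2 = (m - t) + (t + 2) := by omega
      have h4 : m = (m - t) + t := by omega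
      rw [h3, Function.iterate_add_apply, e1, ← Function.iterate_add_apply, ← h4]
    exact e2
  have chain : ∀ t, t ≤ m + 1 →
      (Fintype.card V : ℤ) + 2 * t ≤ energy G (f^[t] g) := by
    intro t
    induction t with
    | zero => intro _; simpa using energy_lb G g
    | succ t ih =>
      intro ht
      have h1 := ih (by omega)
      have h2 := energy_gain G (f^[t] g) (hstep t (by omega))
      rw [Function.iterate_succ_apply']
      push_cast
      push_cast at h1
      linarith
  have hfin := chain (m + 1) le_rfl
  have hub := energy_ub G (f^[m + 1] g)
  push_cast at hfin hub
  linarith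
end

section
/- In the majority model on the torus T_{n,n} with von Neumann neighborhood (n ≥ 5), if the largest blue cluster in generation g_j has size at most 3, then generation g_{j+1} has largest blue cluster of size at most 1, and hence generation g_{j+2} is entirely red. -/
set_option linter.unusedVariables false
set_option maxRecDepth 10000
set_option linter.unreachableTactic false
set_option linter.unusedTactic false

/-- Number of blue cells among the four von Neumann neighbors of `v` in the torus. -/
def vnCount (n : ℕ) (g : ZMod n × ZMod n → Bool) (v : ZMod n × ZMod n) : ℕ :=
  (if g (v.1 + 1, v.2) = true then 1 else 0) + (if g (v.1 - 1, v.2) = true then 1 else 0) +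
    (if g (v.1, v.2 + 1) = true then 1 else 0) + (if g (v.1, v.2 - 1) = true then 1 else 0)

/-- One synchronous step of the majority model on the torus `T_{n,n}` with von Neumann
neighborhood: strict majority among the 4 neighbors, ties conserve the current color. -/
def torusMajStep (n : ℕ) (g : ZMod n × ZMod n → Bool) : ZMod n × ZMod n → Bool :=
  fun v => if 2 < vnCount n g v then true else if vnCount n g v < 2 then false else g v

/-- One synchronous step of the biased majority model on the torus `T_{n,n}` with
von Neumann neighborhood: a cell becomes blue iff at least 2 of its 4 neighbors are blue. -/
def torusBMajStep (n : ℕ) (g : ZMod n × ZMod n → Bool) : ZMod n × ZMod n → Bool :=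
  fun v => decide (2 ≤ vnCount n g v)

/-- Moore (8-)adjacency on the torus `T_{n,n}`. -/
def mooreAdj (n : ℕ) (u v : ZMod n × ZMod n) : Prop :=
  u ≠ v ∧ (u.1 = v.1 ∨ u.1 = v.1 + 1 ∨ v.1 = u.1 + 1) ∧
    (u.2 = v.2 ∨ u.2 = v.2 + 1 ∨ v.2 = u.2 + 1)

/-- The Moore (8-)adjacency graph on the torus `T_{n,n}`. -/
def mooreGraph (n : ℕ) : SimpleGraph (ZMod n × ZMod n) where
  Adj := mooreAdj n
  symm := ⟨by
    rintro u v ⟨h0, h1, h2⟩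
    exact ⟨Ne.symm h0, by tauto, by tauto⟩⟩
  loopless := ⟨fun v h => h.1 rfl⟩

/-- There is a blue, Moore-connected set of exactly `k` cells in configuration `g`.
(The largest blue cluster has size at most `k - 1` iff this fails.) -/
def HasBlueClusterOfSize (n : ℕ) (g : ZMod n × ZMod n → Bool) (k : ℕ) : Prop :=
  ∃ S : Finset (ZMod n × ZMod n), S.card = k ∧ (∀ v ∈ S, g v = true) ∧
    ((mooreGraph n).induce (S : Set (ZMod n × ZMod n))).Connected

/- ===== Auxiliary infrastructure ===== -/

abbrev MCell := ℤ × ℤ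

def mCount (c : MCell → Bool) (p : MCell) : ℕ :=
  (if c (p.1 + 1, p.2) = true then 1 else 0) + (if c (p.1 - 1, p.2) = true then 1 else 0) +
    (if c (p.1, p.2 + 1) = true then 1 else 0) + (if c (p.1, p.2 - 1) = true then 1 else 0)

def mStep (c : MCell → Bool) (p : MCell) : Bool :=
  if 2 < mCount c p then true else if mCount c p < 2 then false else c p

def mBdd (p : MCell) : Prop := p.1.natAbs ≤ 2 ∧ p.2.natAbs ≤ 2

def iAdj (p q : MCell) : Prop :=
  (p.1 = q.1 ∨ p.1 = q.1 + 1 ∨ q.1 = p.1 + 1) ∧ (p.2 = q.2 ∨ p.2 = q.2 + 1 ∨ q.2 = p.2 + 1)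

def MStruct (q : MCell × MCell × MCell × MCell) : Prop :=
  mBdd q.1 ∧ mBdd q.2.1 ∧ mBdd q.2.2.1 ∧ mBdd q.2.2.2 ∧
  q.1 ≠ q.2.1 ∧ q.1 ≠ q.2.2.1 ∧ q.1 ≠ q.2.2.2 ∧ q.2.1 ≠ q.2.2.1 ∧ q.2.1 ≠ q.2.2.2 ∧
  q.2.2.1 ≠ q.2.2.2 ∧
  iAdj q.1 q.2.1 ∧ (iAdj q.1 q.2.2.1 ∨ iAdj q.2.1 q.2.2.1) ∧
  (iAdj q.1 q.2.2.2 ∨ iAdj q.2.1 q.2.2.2 ∨ iAdj q.2.2.1 q.2.2.2)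

instance : DecidablePred mBdd := fun p => by unfold mBdd; infer_instance
instance (p q : MCell) : Decidable (iAdj p q) := by unfold iAdj; infer_instance
instance (q : MCell × MCell × MCell × MCell) : Decidable (MStruct q) := by
  unfold MStruct; infer_instance

def emb (n : ℕ) (u : ZMod n × ZMod n) (p : MCell) : ZMod n × ZMod n :=
  (u.1 + (p.1 : ZMod n), u.2 + (p.2 : ZMod n))

lemma castInj (n : ℕ) (hn : 5 ≤ n) {x y : ℤ} (hx : x.natAbs ≤ 2) (hy : y.natAbs ≤ 2)
    (h : (x : ZMod n) = (y : ZMod n)) : x = y := by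
  rw [ZMod.intCast_eq_intCast_iff] at h
  obtain ⟨k, hk⟩ := Int.ModEq.dvd h
  have hn' : (5 : ℤ) ≤ (n : ℤ) := by exact_mod_cast hn
  have bx1 : -2 ≤ x := by omega
  have bx2 : x ≤ 2 := by omega
  have by1 : -2 ≤ y := by omega
  have by2 : y ≤ 2 := by omega
  rcases lt_trichotomy k 0 with hk1 | rfl | hk1
  · have h1 : (n : ℤ) * k ≤ (n : ℤ) * (-1) := by
      apply mul_le_mul_of_nonneg_left (by omega) (by linarith)
    have h2 : (n : ℤ) * (-1) = -(n : ℤ) := by ring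
    linarith
  · simp at hk; linarith
  · have h1 : (n : ℤ) * 1 ≤ (n : ℤ) * k := by
      apply mul_le_mul_of_nonneg_left (by omega) (by linarith)
    have h2 : (n : ℤ) * 1 = (n : ℤ) := by ring
    linarith

lemma emb_inj (n : ℕ) (hn : 5 ≤ n) (u : ZMod n × ZMod n) {p q : MCell}
    (hp : mBdd p) (hq : mBdd q) (hne : p ≠ q) : emb n u p ≠ emb n u q := by
  intro he
  apply hne
  rw [Prod.ext_iff] at he ⊢
  obtain ⟨h1, h2⟩ := he
  have h1' : (p.1 : ZMod n) = (q.1 : ZMod n) := by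
    have := h1; unfold emb at this; simpa using add_left_cancel this
  have h2' : (p.2 : ZMod n) = (q.2 : ZMod n) := by
    have := h2; unfold emb at this; simpa using add_left_cancel this
  exact ⟨castInj n hn hp.1 hq.1 h1', castInj n hn hp.2 hq.2 h2'⟩

lemma emb_adj (n : ℕ) (hn : 5 ≤ n) (u : ZMod n × ZMod n) {p q : MCell}
    (hp : mBdd p) (hq : mBdd q) (hne : p ≠ q) (ha : iAdj p q) :
    mooreAdj n (emb n u p) (emb n u q) := by
  refine ⟨emb_inj n hn u hp hq hne, ?_, ?_⟩
  · rcases ha.1 with h | h | h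
    · exact Or.inl (show u.1 + (p.1 : ZMod n) = u.1 + (q.1 : ZMod n) by rw [h])
    · refine Or.inr (Or.inl ?_)
      show u.1 + (p.1 : ZMod n) = u.1 + (q.1 : ZMod n) + 1
      rw [h]; push_cast; ring
    · refine Or.inr (Or.inr ?_)
      show u.1 + (q.1 : ZMod n) = u.1 + (p.1 : ZMod n) + 1
      rw [h]; push_cast; ring
  · rcases ha.2 with h | h | h
    · exact Or.inl (show u.2 + (p.2 : ZMod n) = u.2 + (q.2 : ZMod n) by rw [h])
    · refine Or.inr (Or.inl ?_)
      show u.2 + (p.2 : ZMod n) = u.2 + (q.2 : ZMod n) + 1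
      rw [h]; push_cast; ring
    · refine Or.inr (Or.inr ?_)
      show u.2 + (q.2 : ZMod n) = u.2 + (p.2 : ZMod n) + 1
      rw [h]; push_cast; ring

lemma emb_count (n : ℕ) (g : ZMod n × ZMod n → Bool) (u : ZMod n × ZMod n) (p : MCell) :
    vnCount n g (emb n u p) = mCount (fun q => g (emb n u q)) p := by
  have h1 : ((emb n u p).1 + 1, (emb n u p).2) = emb n u (p.1 + 1, p.2) := by
    unfold emb; rw [Prod.ext_iff]; constructor <;> (push_cast; ring_nf)
  have h2 : ((emb n u p).1 - 1, (emb n u p).2) = emb n u (p.1 - 1, p.2) := by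
    unfold emb; rw [Prod.ext_iff]; constructor <;> (push_cast; ring_nf)
  have h3 : ((emb n u p).1, (emb n u p).2 + 1) = emb n u (p.1, p.2 + 1) := by
    unfold emb; rw [Prod.ext_iff]; constructor <;> (push_cast; ring_nf)
  have h4 : ((emb n u p).1, (emb n u p).2 - 1) = emb n u (p.1, p.2 - 1) := by
    unfold emb; rw [Prod.ext_iff]; constructor <;> (push_cast; ring_nf)
  unfold vnCount mCount
  rw [h1, h2, h3, h4]

lemma emb_step (n : ℕ) (g : ZMod n × ZMod n → Bool) (u : ZMod n × ZMod n) (p : MCell) :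
    torusMajStep n g (emb n u p) = mStep (fun q => g (emb n u q)) p := by
  unfold torusMajStep mStep
  rw [emb_count]

lemma mStep_congr (c₁ c₂ : MCell → Bool) (p : MCell)
    (h0 : c₁ p = c₂ p)
    (h1 : c₁ (p.1 + 1, p.2) = c₂ (p.1 + 1, p.2))
    (h2 : c₁ (p.1 - 1, p.2) = c₂ (p.1 - 1, p.2))
    (h3 : c₁ (p.1, p.2 + 1) = c₂ (p.1, p.2 + 1))
    (h4 : c₁ (p.1, p.2 - 1) = c₂ (p.1, p.2 - 1)) : mStep c₁ p = mStep c₂ p := by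
  unfold mStep mCount
  rw [h0, h1, h2, h3, h4]

lemma induce_adj_of {V : Type*} {G : SimpleGraph V} {s : Set V} {x y : V} (hx : x ∈ s) (hy : y ∈ s)
    (h : G.Adj x y) : (G.induce s).Adj ⟨x, hx⟩ ⟨y, hy⟩ := h

lemma conn4 {V : Type*} (G : SimpleGraph V) (a b c d : V)
    (hab : G.Adj a b) (hc : G.Adj a c ∨ G.Adj b c)
    (hd : G.Adj a d ∨ G.Adj b d ∨ G.Adj c d) :
    (G.induce ({a, b, c, d} : Set V)).Connected := by
  have ma : a ∈ ({a, b, c, d} : Set V) := by simp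
  have mb : b ∈ ({a, b, c, d} : Set V) := by simp
  have mc : c ∈ ({a, b, c, d} : Set V) := by simp
  have md : d ∈ ({a, b, c, d} : Set V) := by simp
  have rb : (G.induce ({a, b, c, d} : Set V)).Reachable ⟨b, mb⟩ ⟨a, ma⟩ :=
    (induce_adj_of mb ma hab.symm).reachable
  have rc : (G.induce ({a, b, c, d} : Set V)).Reachable ⟨c, mc⟩ ⟨a, ma⟩ := by
    rcases hc with h | h
    · exact (induce_adj_of mc ma h.symm).reachable
    · exact ((induce_adj_of mc mb h.symm).reachable).trans rb
  have rd : (G.induce ({a, b, c, d} : Set V)).Reachable ⟨d, md⟩ ⟨a, ma⟩ := by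
    rcases hd with h | h | h
    · exact (induce_adj_of md ma h.symm).reachable
    · exact ((induce_adj_of md mb h.symm).reachable).trans rb
    · exact ((induce_adj_of md mc h.symm).reachable).trans rc
  have ra : ∀ (x : V) (hx : x ∈ ({a, b, c, d} : Set V)),
      (G.induce ({a, b, c, d} : Set V)).Reachable ⟨x, hx⟩ ⟨a, ma⟩ := by
    intro x hx
    have hx' := hx
    simp only [Set.mem_insert_iff, Set.mem_singleton_iff] at hx'
    rcases hx' with rfl | rfl | rfl | rfl
    · exact SimpleGraph.Reachable.refl _
    · exact rb
    · exact rc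
    · exact rd
  haveI : Nonempty ({a, b, c, d} : Set V) := ⟨⟨a, ma⟩⟩
  exact ⟨fun x y => (ra x.1 x.2).trans (ra y.1 y.2).symm⟩

lemma cluster4 (n : ℕ) (g : ZMod n × ZMod n → Bool) (a b c d : ZMod n × ZMod n)
    (nab : a ≠ b) (nac : a ≠ c) (nad : a ≠ d) (nbc : b ≠ c) (nbd : b ≠ d) (ncd : c ≠ d)
    (hab : mooreAdj n a b) (hc : mooreAdj n a c ∨ mooreAdj n b c)
    (hd : mooreAdj n a d ∨ mooreAdj n b d ∨ mooreAdj n c d)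
    (ba : g a = true) (bb : g b = true) (bc : g c = true) (bd : g d = true) :
    HasBlueClusterOfSize n g 4 := by
  refine ⟨{a, b, c, d}, ?_, ?_, ?_⟩
  · rw [Finset.card_insert_of_notMem (by simp [nab, nac, nad]),
      Finset.card_insert_of_notMem (by simp [nbc, nbd]),
      Finset.card_insert_of_notMem (by simp [ncd]), Finset.card_singleton]
  · intro v hv
    simp only [Finset.mem_insert, Finset.mem_singleton] at hv
    rcases hv with rfl | rfl | rfl | rfl <;> assumption
  · have hset : ((({a, b, c, d} : Finset (ZMod n × ZMod n))) : Set (ZMod n × ZMod n))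
        = ({a, b, c, d} : Set (ZMod n × ZMod n)) := by simp
    rw [hset]
    exact conn4 (mooreGraph n) a b c d hab hc hd

lemma adj_of_conn_two (n : ℕ) {a b : ZMod n × ZMod n} (hne : a ≠ b)
    (hconn : ((mooreGraph n).induce ((({a, b} : Finset (ZMod n × ZMod n))) :
      Set (ZMod n × ZMod n))).Connected) : mooreAdj n a b := by
  have ma : a ∈ ((({a, b} : Finset (ZMod n × ZMod n))) : Set (ZMod n × ZMod n)) := by simp
  have mb : b ∈ ((({a, b} : Finset (ZMod n × ZMod n))) : Set (ZMod n × ZMod n)) := by simp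
  obtain ⟨w⟩ := hconn.preconnected ⟨a, ma⟩ ⟨b, mb⟩
  suffices H : ∀ (x y : ((({a, b} : Finset (ZMod n × ZMod n))) : Set (ZMod n × ZMod n)))
      (_ : ((mooreGraph n).induce _).Walk x y), x.1 = a → y.1 = b → mooreAdj n a b from
    H _ _ w rfl rfl
  intro x y w
  induction w with
  | nil => intro h1 h2; exact absurd (h1.symm.trans h2) hne
  | @cons x z y hadj p ih =>
    intro h1 h2
    have hz : z.1 = a ∨ z.1 = b := by
      have := z.2; simpa using this
    rcases hz with hza | hzb
    · exact ih hza h2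
    · have hA : mooreAdj n x.1 z.1 := hadj
      rw [h1, hzb] at hA
      exact hA

lemma posKeyGen (n : ℕ) (hn : 5 ≤ n) (g : ZMod n × ZMod n → Bool)
    (h : ¬ HasBlueClusterOfSize n g 4) (u : ZMod n × ZMod n) (d : MCell)
    (cells : Fin 8 → MCell) (idx : MCell → Fin 8) (cand : List (MCell × MCell × MCell × MCell))
    (hr0 : cells (idx ((0 : ℤ), (0 : ℤ))) = ((0 : ℤ), (0 : ℤ)))
    (hr1 : cells (idx ((1 : ℤ), (0 : ℤ))) = ((1 : ℤ), (0 : ℤ)))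
    (hr2 : cells (idx ((-1 : ℤ), (0 : ℤ))) = ((-1 : ℤ), (0 : ℤ)))
    (hr3 : cells (idx ((0 : ℤ), (1 : ℤ))) = ((0 : ℤ), (1 : ℤ)))
    (hr4 : cells (idx ((0 : ℤ), (-1 : ℤ))) = ((0 : ℤ), (-1 : ℤ)))
    (hr5 : cells (idx d) = d)
    (hr6 : cells (idx (d.1 + 1, d.2)) = (d.1 + 1, d.2))
    (hr7 : cells (idx (d.1 - 1, d.2)) = (d.1 - 1, d.2))
    (hr8 : cells (idx (d.1, d.2 + 1)) = (d.1, d.2 + 1))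
    (hr9 : cells (idx (d.1, d.2 - 1)) = (d.1, d.2 - 1))
    (hmain : ∀ f : Fin 8 → Bool,
      mStep (fun p => f (idx p)) ((0 : ℤ), (0 : ℤ)) = true →
      mStep (fun p => f (idx p)) d = true →
      ∃ q ∈ cand, f (idx q.1) = true ∧ f (idx q.2.1) = true ∧ f (idx q.2.2.1) = true ∧
        f (idx q.2.2.2) = true)
    (hstruct : ∀ q ∈ cand, MStruct q ∧ cells (idx q.1) = q.1 ∧ cells (idx q.2.1) = q.2.1 ∧
      cells (idx q.2.2.1) = q.2.2.1 ∧ cells (idx q.2.2.2) = q.2.2.2)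
    (hu : torusMajStep n g u = true) (hv : torusMajStep n g (emb n u d) = true) : False := by
  have e00 : emb n u ((0 : ℤ), (0 : ℤ)) = u := by
    unfold emb; rw [Prod.ext_iff]; constructor <;> simp
  have hu' : mStep (fun q => g (emb n u q)) ((0 : ℤ), (0 : ℤ)) = true := by
    rw [← emb_step, e00]; exact hu
  have hv' : mStep (fun q => g (emb n u q)) d = true := by
    rw [← emb_step]; exact hv
  have hA : mStep (fun p => g (emb n u (cells (idx p)))) ((0 : ℤ), (0 : ℤ))
      = mStep (fun q => g (emb n u q)) ((0 : ℤ), (0 : ℤ)) :=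
    mStep_congr (fun p => g (emb n u (cells (idx p)))) (fun q => g (emb n u q)) ((0 : ℤ), (0 : ℤ))
      (congrArg (fun z => g (emb n u z)) hr0) (congrArg (fun z => g (emb n u z)) hr1)
      (congrArg (fun z => g (emb n u z)) hr2) (congrArg (fun z => g (emb n u z)) hr3)
      (congrArg (fun z => g (emb n u z)) hr4)
  have hB : mStep (fun p => g (emb n u (cells (idx p)))) d
      = mStep (fun q => g (emb n u q)) d :=
    mStep_congr (fun p => g (emb n u (cells (idx p)))) (fun q => g (emb n u q)) d
      (congrArg (fun z => g (emb n u z)) hr5) (congrArg (fun z => g (emb n u z)) hr6)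
      (congrArg (fun z => g (emb n u z)) hr7) (congrArg (fun z => g (emb n u z)) hr8)
      (congrArg (fun z => g (emb n u z)) hr9)
  obtain ⟨q, hqmem, b1, b2, b3, b4⟩ := hmain (fun i => g (emb n u (cells i)))
    (hA.trans hu') (hB.trans hv')
  obtain ⟨⟨bd1, bd2, bd3, bd4, ne12, ne13, ne14, ne23, ne24, ne34, adj12, adj3, adj4⟩,
    r1, r2, r3, r4⟩ := hstruct q hqmem
  have B1 : g (emb n u q.1) = true := by rw [← r1]; exact b1
  have B2 : g (emb n u q.2.1) = true := by rw [← r2]; exact b2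
  have B3 : g (emb n u q.2.2.1) = true := by rw [← r3]; exact b3
  have B4 : g (emb n u q.2.2.2) = true := by rw [← r4]; exact b4
  exact h (cluster4 n g (emb n u q.1) (emb n u q.2.1) (emb n u q.2.2.1) (emb n u q.2.2.2)
    (emb_inj n hn u bd1 bd2 ne12) (emb_inj n hn u bd1 bd3 ne13) (emb_inj n hn u bd1 bd4 ne14)
    (emb_inj n hn u bd2 bd3 ne23) (emb_inj n hn u bd2 bd4 ne24) (emb_inj n hn u bd3 bd4 ne34)
    (emb_adj n hn u bd1 bd2 ne12 adj12)
    (adj3.imp (fun t => emb_adj n hn u bd1 bd3 ne13 t) (fun t => emb_adj n hn u bd2 bd3 ne23 t))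
    (adj4.imp (fun t => emb_adj n hn u bd1 bd4 ne14 t)
      (fun o => o.imp (fun t => emb_adj n hn u bd2 bd4 ne24 t)
        (fun t => emb_adj n hn u bd3 bd4 ne34 t)))
    B1 B2 B3 B4)

def cells1 : Fin 8 → MCell := ![((0 : ℤ), (0 : ℤ)), ((1 : ℤ), (0 : ℤ)), ((-1 : ℤ), (0 : ℤ)), ((0 : ℤ), (1 : ℤ)), ((0 : ℤ), (-1 : ℤ)), ((2 : ℤ), (0 : ℤ)), ((1 : ℤ), (1 : ℤ)), ((1 : ℤ), (-1 : ℤ))]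

def idx1 : MCell → Fin 8 := fun p => if p = ((0 : ℤ), (0 : ℤ)) then 0 else if p = ((1 : ℤ), (0 : ℤ)) then 1 else if p = ((-1 : ℤ), (0 : ℤ)) then 2 else if p = ((0 : ℤ), (1 : ℤ)) then 3 else if p = ((0 : ℤ), (-1 : ℤ)) then 4 else if p = ((2 : ℤ), (0 : ℤ)) then 5 else if p = ((1 : ℤ), (1 : ℤ)) then 6 else if p = ((1 : ℤ), (-1 : ℤ)) then 7 else 0

def cand1 : List (MCell × MCell × MCell × MCell) := [
  (((-1 : ℤ), (0 : ℤ)), ((0 : ℤ), (1 : ℤ)), ((0 : ℤ), (-1 : ℤ)), ((1 : ℤ), (1 : ℤ))),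
  (((1 : ℤ), (0 : ℤ)), ((0 : ℤ), (1 : ℤ)), ((0 : ℤ), (-1 : ℤ)), ((1 : ℤ), (1 : ℤ))),
  (((1 : ℤ), (0 : ℤ)), ((0 : ℤ), (1 : ℤ)), ((0 : ℤ), (-1 : ℤ)), ((2 : ℤ), (0 : ℤ))),
  (((1 : ℤ), (0 : ℤ)), ((0 : ℤ), (-1 : ℤ)), ((-1 : ℤ), (0 : ℤ)), ((1 : ℤ), (1 : ℤ))),
  (((1 : ℤ), (0 : ℤ)), ((0 : ℤ), (-1 : ℤ)), ((-1 : ℤ), (0 : ℤ)), ((2 : ℤ), (0 : ℤ))),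
  (((1 : ℤ), (0 : ℤ)), ((0 : ℤ), (1 : ℤ)), ((-1 : ℤ), (0 : ℤ)), ((1 : ℤ), (1 : ℤ))),
  (((1 : ℤ), (0 : ℤ)), ((0 : ℤ), (1 : ℤ)), ((-1 : ℤ), (0 : ℤ)), ((2 : ℤ), (0 : ℤ))),
  (((0 : ℤ), (0 : ℤ)), ((0 : ℤ), (1 : ℤ)), ((0 : ℤ), (-1 : ℤ)), ((1 : ℤ), (1 : ℤ))),
  (((0 : ℤ), (0 : ℤ)), ((0 : ℤ), (1 : ℤ)), ((0 : ℤ), (-1 : ℤ)), ((1 : ℤ), (-1 : ℤ))),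
  (((0 : ℤ), (0 : ℤ)), ((-1 : ℤ), (0 : ℤ)), ((0 : ℤ), (-1 : ℤ)), ((1 : ℤ), (1 : ℤ))),
  (((0 : ℤ), (0 : ℤ)), ((-1 : ℤ), (0 : ℤ)), ((0 : ℤ), (-1 : ℤ)), ((1 : ℤ), (-1 : ℤ))),
  (((0 : ℤ), (0 : ℤ)), ((-1 : ℤ), (0 : ℤ)), ((0 : ℤ), (1 : ℤ)), ((1 : ℤ), (1 : ℤ))),
  (((0 : ℤ), (0 : ℤ)), ((-1 : ℤ), (0 : ℤ)), ((0 : ℤ), (1 : ℤ)), ((1 : ℤ), (-1 : ℤ))),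
  (((0 : ℤ), (0 : ℤ)), ((1 : ℤ), (0 : ℤ)), ((0 : ℤ), (-1 : ℤ)), ((1 : ℤ), (-1 : ℤ))),
  (((0 : ℤ), (0 : ℤ)), ((1 : ℤ), (0 : ℤ)), ((0 : ℤ), (-1 : ℤ)), ((1 : ℤ), (1 : ℤ))),
  (((0 : ℤ), (0 : ℤ)), ((1 : ℤ), (0 : ℤ)), ((0 : ℤ), (-1 : ℤ)), ((2 : ℤ), (0 : ℤ))),
  (((0 : ℤ), (0 : ℤ)), ((1 : ℤ), (0 : ℤ)), ((0 : ℤ), (1 : ℤ)), ((1 : ℤ), (-1 : ℤ))),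
  (((0 : ℤ), (0 : ℤ)), ((1 : ℤ), (0 : ℤ)), ((0 : ℤ), (1 : ℤ)), ((1 : ℤ), (1 : ℤ))),
  (((0 : ℤ), (0 : ℤ)), ((1 : ℤ), (0 : ℤ)), ((0 : ℤ), (1 : ℤ)), ((2 : ℤ), (0 : ℤ))),
  (((0 : ℤ), (0 : ℤ)), ((1 : ℤ), (0 : ℤ)), ((-1 : ℤ), (0 : ℤ)), ((1 : ℤ), (-1 : ℤ))),
  (((0 : ℤ), (0 : ℤ)), ((1 : ℤ), (0 : ℤ)), ((-1 : ℤ), (0 : ℤ)), ((1 : ℤ), (1 : ℤ))),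
  (((0 : ℤ), (0 : ℤ)), ((1 : ℤ), (0 : ℤ)), ((-1 : ℤ), (0 : ℤ)), ((2 : ℤ), (0 : ℤ)))]

lemma main1 : ∀ f : Fin 8 → Bool,
    mStep (fun p => f (idx1 p)) ((0 : ℤ), (0 : ℤ)) = true →
    mStep (fun p => f (idx1 p)) ((1 : ℤ), (0 : ℤ)) = true →
    ∃ q ∈ cand1, f (idx1 q.1) = true ∧ f (idx1 q.2.1) = true ∧
      f (idx1 q.2.2.1) = true ∧ f (idx1 q.2.2.2) = true := by decide

lemma struct1 : ∀ q ∈ cand1, MStruct q ∧ cells1 (idx1 q.1) = q.1 ∧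
    cells1 (idx1 q.2.1) = q.2.1 ∧ cells1 (idx1 q.2.2.1) = q.2.2.1 ∧
    cells1 (idx1 q.2.2.2) = q.2.2.2 := by decide


def cells2 : Fin 8 → MCell := ![((0 : ℤ), (0 : ℤ)), ((1 : ℤ), (0 : ℤ)), ((-1 : ℤ), (0 : ℤ)), ((0 : ℤ), (1 : ℤ)), ((0 : ℤ), (-1 : ℤ)), ((-2 : ℤ), (0 : ℤ)), ((-1 : ℤ), (1 : ℤ)), ((-1 : ℤ), (-1 : ℤ))]

def idx2 : MCell → Fin 8 := fun p => if p = ((0 : ℤ), (0 : ℤ)) then 0 else if p = ((1 : ℤ), (0 : ℤ)) then 1 else if p = ((-1 : ℤ), (0 : ℤ)) then 2 else if p = ((0 : ℤ), (1 : ℤ)) then 3 else if p = ((0 : ℤ), (-1 : ℤ)) then 4 else if p = ((-2 : ℤ), (0 : ℤ)) then 5 else if p = ((-1 : ℤ), (1 : ℤ)) then 6 else if p = ((-1 : ℤ), (-1 : ℤ)) then 7 else 0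

def cand2 : List (MCell × MCell × MCell × MCell) := [
  (((-1 : ℤ), (0 : ℤ)), ((0 : ℤ), (1 : ℤ)), ((0 : ℤ), (-1 : ℤ)), ((-1 : ℤ), (1 : ℤ))),
  (((-1 : ℤ), (0 : ℤ)), ((0 : ℤ), (1 : ℤ)), ((0 : ℤ), (-1 : ℤ)), ((-2 : ℤ), (0 : ℤ))),
  (((1 : ℤ), (0 : ℤ)), ((0 : ℤ), (1 : ℤ)), ((0 : ℤ), (-1 : ℤ)), ((-1 : ℤ), (1 : ℤ))),
  (((1 : ℤ), (0 : ℤ)), ((0 : ℤ), (-1 : ℤ)), ((-1 : ℤ), (0 : ℤ)), ((-1 : ℤ), (1 : ℤ))),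
  (((1 : ℤ), (0 : ℤ)), ((0 : ℤ), (-1 : ℤ)), ((-1 : ℤ), (0 : ℤ)), ((-2 : ℤ), (0 : ℤ))),
  (((1 : ℤ), (0 : ℤ)), ((0 : ℤ), (1 : ℤ)), ((-1 : ℤ), (0 : ℤ)), ((-1 : ℤ), (1 : ℤ))),
  (((1 : ℤ), (0 : ℤ)), ((0 : ℤ), (1 : ℤ)), ((-1 : ℤ), (0 : ℤ)), ((-2 : ℤ), (0 : ℤ))),
  (((0 : ℤ), (0 : ℤ)), ((0 : ℤ), (1 : ℤ)), ((0 : ℤ), (-1 : ℤ)), ((-1 : ℤ), (1 : ℤ))),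
  (((0 : ℤ), (0 : ℤ)), ((0 : ℤ), (1 : ℤ)), ((0 : ℤ), (-1 : ℤ)), ((-1 : ℤ), (-1 : ℤ))),
  (((0 : ℤ), (0 : ℤ)), ((-1 : ℤ), (0 : ℤ)), ((0 : ℤ), (-1 : ℤ)), ((-1 : ℤ), (-1 : ℤ))),
  (((0 : ℤ), (0 : ℤ)), ((-1 : ℤ), (0 : ℤ)), ((0 : ℤ), (-1 : ℤ)), ((-1 : ℤ), (1 : ℤ))),
  (((0 : ℤ), (0 : ℤ)), ((-1 : ℤ), (0 : ℤ)), ((0 : ℤ), (-1 : ℤ)), ((-2 : ℤ), (0 : ℤ))),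
  (((0 : ℤ), (0 : ℤ)), ((-1 : ℤ), (0 : ℤ)), ((0 : ℤ), (1 : ℤ)), ((-1 : ℤ), (-1 : ℤ))),
  (((0 : ℤ), (0 : ℤ)), ((-1 : ℤ), (0 : ℤ)), ((0 : ℤ), (1 : ℤ)), ((-1 : ℤ), (1 : ℤ))),
  (((0 : ℤ), (0 : ℤ)), ((-1 : ℤ), (0 : ℤ)), ((0 : ℤ), (1 : ℤ)), ((-2 : ℤ), (0 : ℤ))),
  (((0 : ℤ), (0 : ℤ)), ((1 : ℤ), (0 : ℤ)), ((0 : ℤ), (-1 : ℤ)), ((-1 : ℤ), (1 : ℤ))),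
  (((0 : ℤ), (0 : ℤ)), ((1 : ℤ), (0 : ℤ)), ((0 : ℤ), (-1 : ℤ)), ((-1 : ℤ), (-1 : ℤ))),
  (((0 : ℤ), (0 : ℤ)), ((1 : ℤ), (0 : ℤ)), ((0 : ℤ), (1 : ℤ)), ((-1 : ℤ), (1 : ℤ))),
  (((0 : ℤ), (0 : ℤ)), ((1 : ℤ), (0 : ℤ)), ((0 : ℤ), (1 : ℤ)), ((-1 : ℤ), (-1 : ℤ))),
  (((0 : ℤ), (0 : ℤ)), ((1 : ℤ), (0 : ℤ)), ((-1 : ℤ), (0 : ℤ)), ((-1 : ℤ), (-1 : ℤ))),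
  (((0 : ℤ), (0 : ℤ)), ((1 : ℤ), (0 : ℤ)), ((-1 : ℤ), (0 : ℤ)), ((-1 : ℤ), (1 : ℤ))),
  (((0 : ℤ), (0 : ℤ)), ((1 : ℤ), (0 : ℤ)), ((-1 : ℤ), (0 : ℤ)), ((-2 : ℤ), (0 : ℤ)))]

lemma main2 : ∀ f : Fin 8 → Bool,
    mStep (fun p => f (idx2 p)) ((0 : ℤ), (0 : ℤ)) = true →
    mStep (fun p => f (idx2 p)) ((-1 : ℤ), (0 : ℤ)) = true →
    ∃ q ∈ cand2, f (idx2 q.1) = true ∧ f (idx2 q.2.1) = true ∧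
      f (idx2 q.2.2.1) = true ∧ f (idx2 q.2.2.2) = true := by decide

lemma struct2 : ∀ q ∈ cand2, MStruct q ∧ cells2 (idx2 q.1) = q.1 ∧
    cells2 (idx2 q.2.1) = q.2.1 ∧ cells2 (idx2 q.2.2.1) = q.2.2.1 ∧
    cells2 (idx2 q.2.2.2) = q.2.2.2 := by decide


def cells3 : Fin 8 → MCell := ![((0 : ℤ), (0 : ℤ)), ((1 : ℤ), (0 : ℤ)), ((-1 : ℤ), (0 : ℤ)), ((0 : ℤ), (1 : ℤ)), ((0 : ℤ), (-1 : ℤ)), ((1 : ℤ), (1 : ℤ)), ((-1 : ℤ), (1 : ℤ)), ((0 : ℤ), (2 : ℤ))]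

def idx3 : MCell → Fin 8 := fun p => if p = ((0 : ℤ), (0 : ℤ)) then 0 else if p = ((1 : ℤ), (0 : ℤ)) then 1 else if p = ((-1 : ℤ), (0 : ℤ)) then 2 else if p = ((0 : ℤ), (1 : ℤ)) then 3 else if p = ((0 : ℤ), (-1 : ℤ)) then 4 else if p = ((1 : ℤ), (1 : ℤ)) then 5 else if p = ((-1 : ℤ), (1 : ℤ)) then 6 else if p = ((0 : ℤ), (2 : ℤ)) then 7 else 0

def cand3 : List (MCell × MCell × MCell × MCell) := [
  (((-1 : ℤ), (0 : ℤ)), ((0 : ℤ), (1 : ℤ)), ((0 : ℤ), (-1 : ℤ)), ((-1 : ℤ), (1 : ℤ))),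
  (((-1 : ℤ), (0 : ℤ)), ((0 : ℤ), (1 : ℤ)), ((0 : ℤ), (-1 : ℤ)), ((1 : ℤ), (1 : ℤ))),
  (((1 : ℤ), (0 : ℤ)), ((0 : ℤ), (1 : ℤ)), ((0 : ℤ), (-1 : ℤ)), ((-1 : ℤ), (1 : ℤ))),
  (((1 : ℤ), (0 : ℤ)), ((0 : ℤ), (1 : ℤ)), ((0 : ℤ), (-1 : ℤ)), ((1 : ℤ), (1 : ℤ))),
  (((1 : ℤ), (0 : ℤ)), ((0 : ℤ), (-1 : ℤ)), ((-1 : ℤ), (0 : ℤ)), ((1 : ℤ), (1 : ℤ))),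
  (((1 : ℤ), (0 : ℤ)), ((0 : ℤ), (1 : ℤ)), ((-1 : ℤ), (0 : ℤ)), ((-1 : ℤ), (1 : ℤ))),
  (((1 : ℤ), (0 : ℤ)), ((0 : ℤ), (1 : ℤ)), ((-1 : ℤ), (0 : ℤ)), ((1 : ℤ), (1 : ℤ))),
  (((0 : ℤ), (0 : ℤ)), ((0 : ℤ), (1 : ℤ)), ((0 : ℤ), (-1 : ℤ)), ((0 : ℤ), (2 : ℤ))),
  (((0 : ℤ), (0 : ℤ)), ((0 : ℤ), (1 : ℤ)), ((0 : ℤ), (-1 : ℤ)), ((-1 : ℤ), (1 : ℤ))),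
  (((0 : ℤ), (0 : ℤ)), ((0 : ℤ), (1 : ℤ)), ((0 : ℤ), (-1 : ℤ)), ((1 : ℤ), (1 : ℤ))),
  (((0 : ℤ), (0 : ℤ)), ((-1 : ℤ), (0 : ℤ)), ((0 : ℤ), (-1 : ℤ)), ((-1 : ℤ), (1 : ℤ))),
  (((0 : ℤ), (0 : ℤ)), ((-1 : ℤ), (0 : ℤ)), ((0 : ℤ), (-1 : ℤ)), ((1 : ℤ), (1 : ℤ))),
  (((0 : ℤ), (0 : ℤ)), ((-1 : ℤ), (0 : ℤ)), ((0 : ℤ), (1 : ℤ)), ((0 : ℤ), (2 : ℤ))),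
  (((0 : ℤ), (0 : ℤ)), ((-1 : ℤ), (0 : ℤ)), ((0 : ℤ), (1 : ℤ)), ((-1 : ℤ), (1 : ℤ))),
  (((0 : ℤ), (0 : ℤ)), ((-1 : ℤ), (0 : ℤ)), ((0 : ℤ), (1 : ℤ)), ((1 : ℤ), (1 : ℤ))),
  (((0 : ℤ), (0 : ℤ)), ((1 : ℤ), (0 : ℤ)), ((0 : ℤ), (-1 : ℤ)), ((-1 : ℤ), (1 : ℤ))),
  (((0 : ℤ), (0 : ℤ)), ((1 : ℤ), (0 : ℤ)), ((0 : ℤ), (-1 : ℤ)), ((1 : ℤ), (1 : ℤ))),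
  (((0 : ℤ), (0 : ℤ)), ((1 : ℤ), (0 : ℤ)), ((0 : ℤ), (1 : ℤ)), ((0 : ℤ), (2 : ℤ))),
  (((0 : ℤ), (0 : ℤ)), ((1 : ℤ), (0 : ℤ)), ((0 : ℤ), (1 : ℤ)), ((-1 : ℤ), (1 : ℤ))),
  (((0 : ℤ), (0 : ℤ)), ((1 : ℤ), (0 : ℤ)), ((0 : ℤ), (1 : ℤ)), ((1 : ℤ), (1 : ℤ))),
  (((0 : ℤ), (0 : ℤ)), ((1 : ℤ), (0 : ℤ)), ((-1 : ℤ), (0 : ℤ)), ((-1 : ℤ), (1 : ℤ))),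
  (((0 : ℤ), (0 : ℤ)), ((1 : ℤ), (0 : ℤ)), ((-1 : ℤ), (0 : ℤ)), ((1 : ℤ), (1 : ℤ)))]

lemma main3 : ∀ f : Fin 8 → Bool,
    mStep (fun p => f (idx3 p)) ((0 : ℤ), (0 : ℤ)) = true →
    mStep (fun p => f (idx3 p)) ((0 : ℤ), (1 : ℤ)) = true →
    ∃ q ∈ cand3, f (idx3 q.1) = true ∧ f (idx3 q.2.1) = true ∧
      f (idx3 q.2.2.1) = true ∧ f (idx3 q.2.2.2) = true := by decide

lemma struct3 : ∀ q ∈ cand3, MStruct q ∧ cells3 (idx3 q.1) = q.1 ∧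
    cells3 (idx3 q.2.1) = q.2.1 ∧ cells3 (idx3 q.2.2.1) = q.2.2.1 ∧
    cells3 (idx3 q.2.2.2) = q.2.2.2 := by decide


def cells4 : Fin 8 → MCell := ![((0 : ℤ), (0 : ℤ)), ((1 : ℤ), (0 : ℤ)), ((-1 : ℤ), (0 : ℤ)), ((0 : ℤ), (1 : ℤ)), ((0 : ℤ), (-1 : ℤ)), ((1 : ℤ), (-1 : ℤ)), ((-1 : ℤ), (-1 : ℤ)), ((0 : ℤ), (-2 : ℤ))]

def idx4 : MCell → Fin 8 := fun p => if p = ((0 : ℤ), (0 : ℤ)) then 0 else if p = ((1 : ℤ), (0 : ℤ)) then 1 else if p = ((-1 : ℤ), (0 : ℤ)) then 2 else if p = ((0 : ℤ), (1 : ℤ)) then 3 else if p = ((0 : ℤ), (-1 : ℤ)) then 4 else if p = ((1 : ℤ), (-1 : ℤ)) then 5 else if p = ((-1 : ℤ), (-1 : ℤ)) then 6 else if p = ((0 : ℤ), (-2 : ℤ)) then 7 else 0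

def cand4 : List (MCell × MCell × MCell × MCell) := [
  (((-1 : ℤ), (0 : ℤ)), ((0 : ℤ), (1 : ℤ)), ((0 : ℤ), (-1 : ℤ)), ((-1 : ℤ), (-1 : ℤ))),
  (((-1 : ℤ), (0 : ℤ)), ((0 : ℤ), (1 : ℤ)), ((0 : ℤ), (-1 : ℤ)), ((1 : ℤ), (-1 : ℤ))),
  (((1 : ℤ), (0 : ℤ)), ((0 : ℤ), (1 : ℤ)), ((0 : ℤ), (-1 : ℤ)), ((-1 : ℤ), (-1 : ℤ))),
  (((1 : ℤ), (0 : ℤ)), ((0 : ℤ), (1 : ℤ)), ((0 : ℤ), (-1 : ℤ)), ((1 : ℤ), (-1 : ℤ))),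
  (((1 : ℤ), (0 : ℤ)), ((0 : ℤ), (-1 : ℤ)), ((-1 : ℤ), (0 : ℤ)), ((-1 : ℤ), (-1 : ℤ))),
  (((1 : ℤ), (0 : ℤ)), ((0 : ℤ), (-1 : ℤ)), ((-1 : ℤ), (0 : ℤ)), ((1 : ℤ), (-1 : ℤ))),
  (((1 : ℤ), (0 : ℤ)), ((0 : ℤ), (1 : ℤ)), ((-1 : ℤ), (0 : ℤ)), ((1 : ℤ), (-1 : ℤ))),
  (((0 : ℤ), (0 : ℤ)), ((0 : ℤ), (1 : ℤ)), ((0 : ℤ), (-1 : ℤ)), ((0 : ℤ), (-2 : ℤ))),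
  (((0 : ℤ), (0 : ℤ)), ((0 : ℤ), (1 : ℤ)), ((0 : ℤ), (-1 : ℤ)), ((-1 : ℤ), (-1 : ℤ))),
  (((0 : ℤ), (0 : ℤ)), ((0 : ℤ), (1 : ℤ)), ((0 : ℤ), (-1 : ℤ)), ((1 : ℤ), (-1 : ℤ))),
  (((0 : ℤ), (0 : ℤ)), ((-1 : ℤ), (0 : ℤ)), ((0 : ℤ), (-1 : ℤ)), ((0 : ℤ), (-2 : ℤ))),
  (((0 : ℤ), (0 : ℤ)), ((-1 : ℤ), (0 : ℤ)), ((0 : ℤ), (-1 : ℤ)), ((-1 : ℤ), (-1 : ℤ))),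
  (((0 : ℤ), (0 : ℤ)), ((-1 : ℤ), (0 : ℤ)), ((0 : ℤ), (-1 : ℤ)), ((1 : ℤ), (-1 : ℤ))),
  (((0 : ℤ), (0 : ℤ)), ((-1 : ℤ), (0 : ℤ)), ((0 : ℤ), (1 : ℤ)), ((-1 : ℤ), (-1 : ℤ))),
  (((0 : ℤ), (0 : ℤ)), ((-1 : ℤ), (0 : ℤ)), ((0 : ℤ), (1 : ℤ)), ((1 : ℤ), (-1 : ℤ))),
  (((0 : ℤ), (0 : ℤ)), ((1 : ℤ), (0 : ℤ)), ((0 : ℤ), (-1 : ℤ)), ((0 : ℤ), (-2 : ℤ))),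
  (((0 : ℤ), (0 : ℤ)), ((1 : ℤ), (0 : ℤ)), ((0 : ℤ), (-1 : ℤ)), ((-1 : ℤ), (-1 : ℤ))),
  (((0 : ℤ), (0 : ℤ)), ((1 : ℤ), (0 : ℤ)), ((0 : ℤ), (-1 : ℤ)), ((1 : ℤ), (-1 : ℤ))),
  (((0 : ℤ), (0 : ℤ)), ((1 : ℤ), (0 : ℤ)), ((0 : ℤ), (1 : ℤ)), ((-1 : ℤ), (-1 : ℤ))),
  (((0 : ℤ), (0 : ℤ)), ((1 : ℤ), (0 : ℤ)), ((0 : ℤ), (1 : ℤ)), ((1 : ℤ), (-1 : ℤ))),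
  (((0 : ℤ), (0 : ℤ)), ((1 : ℤ), (0 : ℤ)), ((-1 : ℤ), (0 : ℤ)), ((-1 : ℤ), (-1 : ℤ))),
  (((0 : ℤ), (0 : ℤ)), ((1 : ℤ), (0 : ℤ)), ((-1 : ℤ), (0 : ℤ)), ((1 : ℤ), (-1 : ℤ)))]

lemma main4 : ∀ f : Fin 8 → Bool,
    mStep (fun p => f (idx4 p)) ((0 : ℤ), (0 : ℤ)) = true →
    mStep (fun p => f (idx4 p)) ((0 : ℤ), (-1 : ℤ)) = true →
    ∃ q ∈ cand4, f (idx4 q.1) = true ∧ f (idx4 q.2.1) = true ∧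
      f (idx4 q.2.2.1) = true ∧ f (idx4 q.2.2.2) = true := by decide

lemma struct4 : ∀ q ∈ cand4, MStruct q ∧ cells4 (idx4 q.1) = q.1 ∧
    cells4 (idx4 q.2.1) = q.2.1 ∧ cells4 (idx4 q.2.2.1) = q.2.2.1 ∧
    cells4 (idx4 q.2.2.2) = q.2.2.2 := by decide


def cells5 : Fin 8 → MCell := ![((0 : ℤ), (0 : ℤ)), ((1 : ℤ), (0 : ℤ)), ((-1 : ℤ), (0 : ℤ)), ((0 : ℤ), (1 : ℤ)), ((0 : ℤ), (-1 : ℤ)), ((1 : ℤ), (1 : ℤ)), ((2 : ℤ), (1 : ℤ)), ((1 : ℤ), (2 : ℤ))]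

def idx5 : MCell → Fin 8 := fun p => if p = ((0 : ℤ), (0 : ℤ)) then 0 else if p = ((1 : ℤ), (0 : ℤ)) then 1 else if p = ((-1 : ℤ), (0 : ℤ)) then 2 else if p = ((0 : ℤ), (1 : ℤ)) then 3 else if p = ((0 : ℤ), (-1 : ℤ)) then 4 else if p = ((1 : ℤ), (1 : ℤ)) then 5 else if p = ((2 : ℤ), (1 : ℤ)) then 6 else if p = ((1 : ℤ), (2 : ℤ)) then 7 else 0

def cand5 : List (MCell × MCell × MCell × MCell) := [
  (((-1 : ℤ), (0 : ℤ)), ((0 : ℤ), (1 : ℤ)), ((0 : ℤ), (-1 : ℤ)), ((1 : ℤ), (2 : ℤ))),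
  (((-1 : ℤ), (0 : ℤ)), ((0 : ℤ), (1 : ℤ)), ((0 : ℤ), (-1 : ℤ)), ((1 : ℤ), (1 : ℤ))),
  (((1 : ℤ), (0 : ℤ)), ((0 : ℤ), (1 : ℤ)), ((0 : ℤ), (-1 : ℤ)), ((1 : ℤ), (2 : ℤ))),
  (((1 : ℤ), (0 : ℤ)), ((0 : ℤ), (1 : ℤ)), ((0 : ℤ), (-1 : ℤ)), ((2 : ℤ), (1 : ℤ))),
  (((1 : ℤ), (0 : ℤ)), ((0 : ℤ), (1 : ℤ)), ((0 : ℤ), (-1 : ℤ)), ((1 : ℤ), (1 : ℤ))),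
  (((1 : ℤ), (0 : ℤ)), ((0 : ℤ), (-1 : ℤ)), ((-1 : ℤ), (0 : ℤ)), ((2 : ℤ), (1 : ℤ))),
  (((1 : ℤ), (0 : ℤ)), ((0 : ℤ), (-1 : ℤ)), ((-1 : ℤ), (0 : ℤ)), ((1 : ℤ), (1 : ℤ))),
  (((1 : ℤ), (0 : ℤ)), ((0 : ℤ), (1 : ℤ)), ((-1 : ℤ), (0 : ℤ)), ((1 : ℤ), (2 : ℤ))),
  (((1 : ℤ), (0 : ℤ)), ((0 : ℤ), (1 : ℤ)), ((-1 : ℤ), (0 : ℤ)), ((2 : ℤ), (1 : ℤ))),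
  (((1 : ℤ), (0 : ℤ)), ((0 : ℤ), (1 : ℤ)), ((-1 : ℤ), (0 : ℤ)), ((1 : ℤ), (1 : ℤ))),
  (((0 : ℤ), (0 : ℤ)), ((0 : ℤ), (1 : ℤ)), ((0 : ℤ), (-1 : ℤ)), ((1 : ℤ), (2 : ℤ))),
  (((0 : ℤ), (0 : ℤ)), ((0 : ℤ), (1 : ℤ)), ((0 : ℤ), (-1 : ℤ)), ((1 : ℤ), (1 : ℤ))),
  (((0 : ℤ), (0 : ℤ)), ((-1 : ℤ), (0 : ℤ)), ((0 : ℤ), (-1 : ℤ)), ((1 : ℤ), (1 : ℤ))),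
  (((0 : ℤ), (0 : ℤ)), ((-1 : ℤ), (0 : ℤ)), ((0 : ℤ), (1 : ℤ)), ((1 : ℤ), (2 : ℤ))),
  (((0 : ℤ), (0 : ℤ)), ((-1 : ℤ), (0 : ℤ)), ((0 : ℤ), (1 : ℤ)), ((1 : ℤ), (1 : ℤ))),
  (((0 : ℤ), (0 : ℤ)), ((1 : ℤ), (0 : ℤ)), ((0 : ℤ), (-1 : ℤ)), ((2 : ℤ), (1 : ℤ))),
  (((0 : ℤ), (0 : ℤ)), ((1 : ℤ), (0 : ℤ)), ((0 : ℤ), (-1 : ℤ)), ((1 : ℤ), (1 : ℤ))),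
  (((0 : ℤ), (0 : ℤ)), ((1 : ℤ), (0 : ℤ)), ((0 : ℤ), (1 : ℤ)), ((1 : ℤ), (2 : ℤ))),
  (((0 : ℤ), (0 : ℤ)), ((1 : ℤ), (0 : ℤ)), ((0 : ℤ), (1 : ℤ)), ((2 : ℤ), (1 : ℤ))),
  (((0 : ℤ), (0 : ℤ)), ((1 : ℤ), (0 : ℤ)), ((0 : ℤ), (1 : ℤ)), ((1 : ℤ), (1 : ℤ))),
  (((0 : ℤ), (0 : ℤ)), ((1 : ℤ), (0 : ℤ)), ((-1 : ℤ), (0 : ℤ)), ((2 : ℤ), (1 : ℤ))),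
  (((0 : ℤ), (0 : ℤ)), ((1 : ℤ), (0 : ℤ)), ((-1 : ℤ), (0 : ℤ)), ((1 : ℤ), (1 : ℤ)))]

lemma main5 : ∀ f : Fin 8 → Bool,
    mStep (fun p => f (idx5 p)) ((0 : ℤ), (0 : ℤ)) = true →
    mStep (fun p => f (idx5 p)) ((1 : ℤ), (1 : ℤ)) = true →
    ∃ q ∈ cand5, f (idx5 q.1) = true ∧ f (idx5 q.2.1) = true ∧
      f (idx5 q.2.2.1) = true ∧ f (idx5 q.2.2.2) = true := by decide

lemma struct5 : ∀ q ∈ cand5, MStruct q ∧ cells5 (idx5 q.1) = q.1 ∧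
    cells5 (idx5 q.2.1) = q.2.1 ∧ cells5 (idx5 q.2.2.1) = q.2.2.1 ∧
    cells5 (idx5 q.2.2.2) = q.2.2.2 := by decide


def cells6 : Fin 8 → MCell := ![((0 : ℤ), (0 : ℤ)), ((1 : ℤ), (0 : ℤ)), ((-1 : ℤ), (0 : ℤ)), ((0 : ℤ), (1 : ℤ)), ((0 : ℤ), (-1 : ℤ)), ((1 : ℤ), (-1 : ℤ)), ((2 : ℤ), (-1 : ℤ)), ((1 : ℤ), (-2 : ℤ))]

def idx6 : MCell → Fin 8 := fun p => if p = ((0 : ℤ), (0 : ℤ)) then 0 else if p = ((1 : ℤ), (0 : ℤ)) then 1 else if p = ((-1 : ℤ), (0 : ℤ)) then 2 else if p = ((0 : ℤ), (1 : ℤ)) then 3 else if p = ((0 : ℤ), (-1 : ℤ)) then 4 else if p = ((1 : ℤ), (-1 : ℤ)) then 5 else if p = ((2 : ℤ), (-1 : ℤ)) then 6 else if p = ((1 : ℤ), (-2 : ℤ)) then 7 else 0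

def cand6 : List (MCell × MCell × MCell × MCell) := [
  (((-1 : ℤ), (0 : ℤ)), ((0 : ℤ), (1 : ℤ)), ((0 : ℤ), (-1 : ℤ)), ((1 : ℤ), (-2 : ℤ))),
  (((-1 : ℤ), (0 : ℤ)), ((0 : ℤ), (1 : ℤ)), ((0 : ℤ), (-1 : ℤ)), ((1 : ℤ), (-1 : ℤ))),
  (((1 : ℤ), (0 : ℤ)), ((0 : ℤ), (1 : ℤ)), ((0 : ℤ), (-1 : ℤ)), ((1 : ℤ), (-2 : ℤ))),
  (((1 : ℤ), (0 : ℤ)), ((0 : ℤ), (1 : ℤ)), ((0 : ℤ), (-1 : ℤ)), ((2 : ℤ), (-1 : ℤ))),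
  (((1 : ℤ), (0 : ℤ)), ((0 : ℤ), (1 : ℤ)), ((0 : ℤ), (-1 : ℤ)), ((1 : ℤ), (-1 : ℤ))),
  (((1 : ℤ), (0 : ℤ)), ((0 : ℤ), (-1 : ℤ)), ((-1 : ℤ), (0 : ℤ)), ((1 : ℤ), (-2 : ℤ))),
  (((1 : ℤ), (0 : ℤ)), ((0 : ℤ), (-1 : ℤ)), ((-1 : ℤ), (0 : ℤ)), ((2 : ℤ), (-1 : ℤ))),
  (((1 : ℤ), (0 : ℤ)), ((0 : ℤ), (-1 : ℤ)), ((-1 : ℤ), (0 : ℤ)), ((1 : ℤ), (-1 : ℤ))),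
  (((1 : ℤ), (0 : ℤ)), ((0 : ℤ), (1 : ℤ)), ((-1 : ℤ), (0 : ℤ)), ((2 : ℤ), (-1 : ℤ))),
  (((1 : ℤ), (0 : ℤ)), ((0 : ℤ), (1 : ℤ)), ((-1 : ℤ), (0 : ℤ)), ((1 : ℤ), (-1 : ℤ))),
  (((0 : ℤ), (0 : ℤ)), ((0 : ℤ), (1 : ℤ)), ((0 : ℤ), (-1 : ℤ)), ((1 : ℤ), (-2 : ℤ))),
  (((0 : ℤ), (0 : ℤ)), ((0 : ℤ), (1 : ℤ)), ((0 : ℤ), (-1 : ℤ)), ((1 : ℤ), (-1 : ℤ))),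
  (((0 : ℤ), (0 : ℤ)), ((-1 : ℤ), (0 : ℤ)), ((0 : ℤ), (-1 : ℤ)), ((1 : ℤ), (-2 : ℤ))),
  (((0 : ℤ), (0 : ℤ)), ((-1 : ℤ), (0 : ℤ)), ((0 : ℤ), (-1 : ℤ)), ((1 : ℤ), (-1 : ℤ))),
  (((0 : ℤ), (0 : ℤ)), ((-1 : ℤ), (0 : ℤ)), ((0 : ℤ), (1 : ℤ)), ((1 : ℤ), (-1 : ℤ))),
  (((0 : ℤ), (0 : ℤ)), ((1 : ℤ), (0 : ℤ)), ((0 : ℤ), (-1 : ℤ)), ((1 : ℤ), (-2 : ℤ))),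
  (((0 : ℤ), (0 : ℤ)), ((1 : ℤ), (0 : ℤ)), ((0 : ℤ), (-1 : ℤ)), ((2 : ℤ), (-1 : ℤ))),
  (((0 : ℤ), (0 : ℤ)), ((1 : ℤ), (0 : ℤ)), ((0 : ℤ), (-1 : ℤ)), ((1 : ℤ), (-1 : ℤ))),
  (((0 : ℤ), (0 : ℤ)), ((1 : ℤ), (0 : ℤ)), ((0 : ℤ), (1 : ℤ)), ((2 : ℤ), (-1 : ℤ))),
  (((0 : ℤ), (0 : ℤ)), ((1 : ℤ), (0 : ℤ)), ((0 : ℤ), (1 : ℤ)), ((1 : ℤ), (-1 : ℤ))),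
  (((0 : ℤ), (0 : ℤ)), ((1 : ℤ), (0 : ℤ)), ((-1 : ℤ), (0 : ℤ)), ((2 : ℤ), (-1 : ℤ))),
  (((0 : ℤ), (0 : ℤ)), ((1 : ℤ), (0 : ℤ)), ((-1 : ℤ), (0 : ℤ)), ((1 : ℤ), (-1 : ℤ)))]

lemma main6 : ∀ f : Fin 8 → Bool,
    mStep (fun p => f (idx6 p)) ((0 : ℤ), (0 : ℤ)) = true →
    mStep (fun p => f (idx6 p)) ((1 : ℤ), (-1 : ℤ)) = true →
    ∃ q ∈ cand6, f (idx6 q.1) = true ∧ f (idx6 q.2.1) = true ∧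
      f (idx6 q.2.2.1) = true ∧ f (idx6 q.2.2.2) = true := by decide

lemma struct6 : ∀ q ∈ cand6, MStruct q ∧ cells6 (idx6 q.1) = q.1 ∧
    cells6 (idx6 q.2.1) = q.2.1 ∧ cells6 (idx6 q.2.2.1) = q.2.2.1 ∧
    cells6 (idx6 q.2.2.2) = q.2.2.2 := by decide


def cells7 : Fin 8 → MCell := ![((0 : ℤ), (0 : ℤ)), ((1 : ℤ), (0 : ℤ)), ((-1 : ℤ), (0 : ℤ)), ((0 : ℤ), (1 : ℤ)), ((0 : ℤ), (-1 : ℤ)), ((-1 : ℤ), (1 : ℤ)), ((-2 : ℤ), (1 : ℤ)), ((-1 : ℤ), (2 : ℤ))]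

def idx7 : MCell → Fin 8 := fun p => if p = ((0 : ℤ), (0 : ℤ)) then 0 else if p = ((1 : ℤ), (0 : ℤ)) then 1 else if p = ((-1 : ℤ), (0 : ℤ)) then 2 else if p = ((0 : ℤ), (1 : ℤ)) then 3 else if p = ((0 : ℤ), (-1 : ℤ)) then 4 else if p = ((-1 : ℤ), (1 : ℤ)) then 5 else if p = ((-2 : ℤ), (1 : ℤ)) then 6 else if p = ((-1 : ℤ), (2 : ℤ)) then 7 else 0

def cand7 : List (MCell × MCell × MCell × MCell) := [
  (((-1 : ℤ), (0 : ℤ)), ((0 : ℤ), (1 : ℤ)), ((0 : ℤ), (-1 : ℤ)), ((-1 : ℤ), (2 : ℤ))),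
  (((-1 : ℤ), (0 : ℤ)), ((0 : ℤ), (1 : ℤ)), ((0 : ℤ), (-1 : ℤ)), ((-2 : ℤ), (1 : ℤ))),
  (((-1 : ℤ), (0 : ℤ)), ((0 : ℤ), (1 : ℤ)), ((0 : ℤ), (-1 : ℤ)), ((-1 : ℤ), (1 : ℤ))),
  (((1 : ℤ), (0 : ℤ)), ((0 : ℤ), (1 : ℤ)), ((0 : ℤ), (-1 : ℤ)), ((-1 : ℤ), (2 : ℤ))),
  (((1 : ℤ), (0 : ℤ)), ((0 : ℤ), (1 : ℤ)), ((0 : ℤ), (-1 : ℤ)), ((-1 : ℤ), (1 : ℤ))),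
  (((1 : ℤ), (0 : ℤ)), ((0 : ℤ), (-1 : ℤ)), ((-1 : ℤ), (0 : ℤ)), ((-2 : ℤ), (1 : ℤ))),
  (((1 : ℤ), (0 : ℤ)), ((0 : ℤ), (-1 : ℤ)), ((-1 : ℤ), (0 : ℤ)), ((-1 : ℤ), (1 : ℤ))),
  (((1 : ℤ), (0 : ℤ)), ((0 : ℤ), (1 : ℤ)), ((-1 : ℤ), (0 : ℤ)), ((-1 : ℤ), (2 : ℤ))),
  (((1 : ℤ), (0 : ℤ)), ((0 : ℤ), (1 : ℤ)), ((-1 : ℤ), (0 : ℤ)), ((-2 : ℤ), (1 : ℤ))),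
  (((1 : ℤ), (0 : ℤ)), ((0 : ℤ), (1 : ℤ)), ((-1 : ℤ), (0 : ℤ)), ((-1 : ℤ), (1 : ℤ))),
  (((0 : ℤ), (0 : ℤ)), ((0 : ℤ), (1 : ℤ)), ((0 : ℤ), (-1 : ℤ)), ((-1 : ℤ), (2 : ℤ))),
  (((0 : ℤ), (0 : ℤ)), ((0 : ℤ), (1 : ℤ)), ((0 : ℤ), (-1 : ℤ)), ((-1 : ℤ), (1 : ℤ))),
  (((0 : ℤ), (0 : ℤ)), ((-1 : ℤ), (0 : ℤ)), ((0 : ℤ), (-1 : ℤ)), ((-2 : ℤ), (1 : ℤ))),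
  (((0 : ℤ), (0 : ℤ)), ((-1 : ℤ), (0 : ℤ)), ((0 : ℤ), (-1 : ℤ)), ((-1 : ℤ), (1 : ℤ))),
  (((0 : ℤ), (0 : ℤ)), ((-1 : ℤ), (0 : ℤ)), ((0 : ℤ), (1 : ℤ)), ((-1 : ℤ), (2 : ℤ))),
  (((0 : ℤ), (0 : ℤ)), ((-1 : ℤ), (0 : ℤ)), ((0 : ℤ), (1 : ℤ)), ((-2 : ℤ), (1 : ℤ))),
  (((0 : ℤ), (0 : ℤ)), ((-1 : ℤ), (0 : ℤ)), ((0 : ℤ), (1 : ℤ)), ((-1 : ℤ), (1 : ℤ))),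
  (((0 : ℤ), (0 : ℤ)), ((1 : ℤ), (0 : ℤ)), ((0 : ℤ), (-1 : ℤ)), ((-1 : ℤ), (1 : ℤ))),
  (((0 : ℤ), (0 : ℤ)), ((1 : ℤ), (0 : ℤ)), ((0 : ℤ), (1 : ℤ)), ((-1 : ℤ), (2 : ℤ))),
  (((0 : ℤ), (0 : ℤ)), ((1 : ℤ), (0 : ℤ)), ((0 : ℤ), (1 : ℤ)), ((-1 : ℤ), (1 : ℤ))),
  (((0 : ℤ), (0 : ℤ)), ((1 : ℤ), (0 : ℤ)), ((-1 : ℤ), (0 : ℤ)), ((-2 : ℤ), (1 : ℤ))),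
  (((0 : ℤ), (0 : ℤ)), ((1 : ℤ), (0 : ℤ)), ((-1 : ℤ), (0 : ℤ)), ((-1 : ℤ), (1 : ℤ)))]

lemma main7 : ∀ f : Fin 8 → Bool,
    mStep (fun p => f (idx7 p)) ((0 : ℤ), (0 : ℤ)) = true →
    mStep (fun p => f (idx7 p)) ((-1 : ℤ), (1 : ℤ)) = true →
    ∃ q ∈ cand7, f (idx7 q.1) = true ∧ f (idx7 q.2.1) = true ∧
      f (idx7 q.2.2.1) = true ∧ f (idx7 q.2.2.2) = true := by decide

lemma struct7 : ∀ q ∈ cand7, MStruct q ∧ cells7 (idx7 q.1) = q.1 ∧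
    cells7 (idx7 q.2.1) = q.2.1 ∧ cells7 (idx7 q.2.2.1) = q.2.2.1 ∧
    cells7 (idx7 q.2.2.2) = q.2.2.2 := by decide


def cells8 : Fin 8 → MCell := ![((0 : ℤ), (0 : ℤ)), ((1 : ℤ), (0 : ℤ)), ((-1 : ℤ), (0 : ℤ)), ((0 : ℤ), (1 : ℤ)), ((0 : ℤ), (-1 : ℤ)), ((-1 : ℤ), (-1 : ℤ)), ((-2 : ℤ), (-1 : ℤ)), ((-1 : ℤ), (-2 : ℤ))]

def idx8 : MCell → Fin 8 := fun p => if p = ((0 : ℤ), (0 : ℤ)) then 0 else if p = ((1 : ℤ), (0 : ℤ)) then 1 else if p = ((-1 : ℤ), (0 : ℤ)) then 2 else if p = ((0 : ℤ), (1 : ℤ)) then 3 else if p = ((0 : ℤ), (-1 : ℤ)) then 4 else if p = ((-1 : ℤ), (-1 : ℤ)) then 5 else if p = ((-2 : ℤ), (-1 : ℤ)) then 6 else if p = ((-1 : ℤ), (-2 : ℤ)) then 7 else 0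

def cand8 : List (MCell × MCell × MCell × MCell) := [
  (((-1 : ℤ), (0 : ℤ)), ((0 : ℤ), (1 : ℤ)), ((0 : ℤ), (-1 : ℤ)), ((-1 : ℤ), (-2 : ℤ))),
  (((-1 : ℤ), (0 : ℤ)), ((0 : ℤ), (1 : ℤ)), ((0 : ℤ), (-1 : ℤ)), ((-2 : ℤ), (-1 : ℤ))),
  (((-1 : ℤ), (0 : ℤ)), ((0 : ℤ), (1 : ℤ)), ((0 : ℤ), (-1 : ℤ)), ((-1 : ℤ), (-1 : ℤ))),
  (((1 : ℤ), (0 : ℤ)), ((0 : ℤ), (1 : ℤ)), ((0 : ℤ), (-1 : ℤ)), ((-1 : ℤ), (-2 : ℤ))),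
  (((1 : ℤ), (0 : ℤ)), ((0 : ℤ), (1 : ℤ)), ((0 : ℤ), (-1 : ℤ)), ((-1 : ℤ), (-1 : ℤ))),
  (((1 : ℤ), (0 : ℤ)), ((0 : ℤ), (-1 : ℤ)), ((-1 : ℤ), (0 : ℤ)), ((-1 : ℤ), (-2 : ℤ))),
  (((1 : ℤ), (0 : ℤ)), ((0 : ℤ), (-1 : ℤ)), ((-1 : ℤ), (0 : ℤ)), ((-2 : ℤ), (-1 : ℤ))),
  (((1 : ℤ), (0 : ℤ)), ((0 : ℤ), (-1 : ℤ)), ((-1 : ℤ), (0 : ℤ)), ((-1 : ℤ), (-1 : ℤ))),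
  (((1 : ℤ), (0 : ℤ)), ((0 : ℤ), (1 : ℤ)), ((-1 : ℤ), (0 : ℤ)), ((-2 : ℤ), (-1 : ℤ))),
  (((1 : ℤ), (0 : ℤ)), ((0 : ℤ), (1 : ℤ)), ((-1 : ℤ), (0 : ℤ)), ((-1 : ℤ), (-1 : ℤ))),
  (((0 : ℤ), (0 : ℤ)), ((0 : ℤ), (1 : ℤ)), ((0 : ℤ), (-1 : ℤ)), ((-1 : ℤ), (-2 : ℤ))),
  (((0 : ℤ), (0 : ℤ)), ((0 : ℤ), (1 : ℤ)), ((0 : ℤ), (-1 : ℤ)), ((-1 : ℤ), (-1 : ℤ))),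
  (((0 : ℤ), (0 : ℤ)), ((-1 : ℤ), (0 : ℤ)), ((0 : ℤ), (-1 : ℤ)), ((-1 : ℤ), (-2 : ℤ))),
  (((0 : ℤ), (0 : ℤ)), ((-1 : ℤ), (0 : ℤ)), ((0 : ℤ), (-1 : ℤ)), ((-2 : ℤ), (-1 : ℤ))),
  (((0 : ℤ), (0 : ℤ)), ((-1 : ℤ), (0 : ℤ)), ((0 : ℤ), (-1 : ℤ)), ((-1 : ℤ), (-1 : ℤ))),
  (((0 : ℤ), (0 : ℤ)), ((-1 : ℤ), (0 : ℤ)), ((0 : ℤ), (1 : ℤ)), ((-2 : ℤ), (-1 : ℤ))),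
  (((0 : ℤ), (0 : ℤ)), ((-1 : ℤ), (0 : ℤ)), ((0 : ℤ), (1 : ℤ)), ((-1 : ℤ), (-1 : ℤ))),
  (((0 : ℤ), (0 : ℤ)), ((1 : ℤ), (0 : ℤ)), ((0 : ℤ), (-1 : ℤ)), ((-1 : ℤ), (-2 : ℤ))),
  (((0 : ℤ), (0 : ℤ)), ((1 : ℤ), (0 : ℤ)), ((0 : ℤ), (-1 : ℤ)), ((-1 : ℤ), (-1 : ℤ))),
  (((0 : ℤ), (0 : ℤ)), ((1 : ℤ), (0 : ℤ)), ((0 : ℤ), (1 : ℤ)), ((-1 : ℤ), (-1 : ℤ))),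
  (((0 : ℤ), (0 : ℤ)), ((1 : ℤ), (0 : ℤ)), ((-1 : ℤ), (0 : ℤ)), ((-2 : ℤ), (-1 : ℤ))),
  (((0 : ℤ), (0 : ℤ)), ((1 : ℤ), (0 : ℤ)), ((-1 : ℤ), (0 : ℤ)), ((-1 : ℤ), (-1 : ℤ)))]

lemma main8 : ∀ f : Fin 8 → Bool,
    mStep (fun p => f (idx8 p)) ((0 : ℤ), (0 : ℤ)) = true →
    mStep (fun p => f (idx8 p)) ((-1 : ℤ), (-1 : ℤ)) = true →
    ∃ q ∈ cand8, f (idx8 q.1) = true ∧ f (idx8 q.2.1) = true ∧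
      f (idx8 q.2.2.1) = true ∧ f (idx8 q.2.2.2) = true := by decide

lemma struct8 : ∀ q ∈ cand8, MStruct q ∧ cells8 (idx8 q.1) = q.1 ∧
    cells8 (idx8 q.2.1) = q.2.1 ∧ cells8 (idx8 q.2.2.1) = q.2.2.1 ∧
    cells8 (idx8 q.2.2.2) = q.2.2.2 := by decide

lemma keyLemma (n : ℕ) (hn : 5 ≤ n) (g : ZMod n × ZMod n → Bool)
    (h : ¬ HasBlueClusterOfSize n g 4) (u v : ZMod n × ZMod n) (hadj : mooreAdj n u v)
    (hu : torusMajStep n g u = true) (hv : torusMajStep n g v = true) : False := by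
  obtain ⟨hne, h1, h2⟩ := hadj
  rcases h1 with e1 | e1 | e1 <;> rcases h2 with e2 | e2 | e2
  · exact hne (Prod.ext_iff.mpr ⟨e1, e2⟩)
  · have hveq : v = emb n u ((0 : ℤ), (-1 : ℤ)) := by
      rw [Prod.ext_iff]
      constructor
      · show v.1 = u.1 + ((0 : ℤ) : ZMod n)
        push_cast
        first
        | (rw [e1]; ring)
        | rw [e1]
      · show v.2 = u.2 + ((-1 : ℤ) : ZMod n)
        push_cast
        first
        | (rw [e2]; ring)
        | rw [e2]
    rw [hveq] at hv
    exact posKeyGen n hn g h u ((0 : ℤ), (-1 : ℤ)) cells4 idx4 cand4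
      (by decide) (by decide) (by decide) (by decide) (by decide) (by decide) (by decide)
      (by decide) (by decide) (by decide) main4 struct4 hu hv
  · have hveq : v = emb n u ((0 : ℤ), (1 : ℤ)) := by
      rw [Prod.ext_iff]
      constructor
      · show v.1 = u.1 + ((0 : ℤ) : ZMod n)
        push_cast
        first
        | (rw [e1]; ring)
        | rw [e1]
      · show v.2 = u.2 + ((1 : ℤ) : ZMod n)
        push_cast
        first
        | (rw [e2]; ring)
        | rw [e2]
    rw [hveq] at hv
    exact posKeyGen n hn g h u ((0 : ℤ), (1 : ℤ)) cells3 idx3 cand3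
      (by decide) (by decide) (by decide) (by decide) (by decide) (by decide) (by decide)
      (by decide) (by decide) (by decide) main3 struct3 hu hv
  · have hveq : v = emb n u ((-1 : ℤ), (0 : ℤ)) := by
      rw [Prod.ext_iff]
      constructor
      · show v.1 = u.1 + ((-1 : ℤ) : ZMod n)
        push_cast
        first
        | (rw [e1]; ring)
        | rw [e1]
      · show v.2 = u.2 + ((0 : ℤ) : ZMod n)
        push_cast
        first
        | (rw [e2]; ring)
        | rw [e2]
    rw [hveq] at hv
    exact posKeyGen n hn g h u ((-1 : ℤ), (0 : ℤ)) cells2 idx2 cand2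
      (by decide) (by decide) (by decide) (by decide) (by decide) (by decide) (by decide)
      (by decide) (by decide) (by decide) main2 struct2 hu hv
  · have hveq : v = emb n u ((-1 : ℤ), (-1 : ℤ)) := by
      rw [Prod.ext_iff]
      constructor
      · show v.1 = u.1 + ((-1 : ℤ) : ZMod n)
        push_cast
        first
        | (rw [e1]; ring)
        | rw [e1]
      · show v.2 = u.2 + ((-1 : ℤ) : ZMod n)
        push_cast
        first
        | (rw [e2]; ring)
        | rw [e2]
    rw [hveq] at hv
    exact posKeyGen n hn g h u ((-1 : ℤ), (-1 : ℤ)) cells8 idx8 cand8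
      (by decide) (by decide) (by decide) (by decide) (by decide) (by decide) (by decide)
      (by decide) (by decide) (by decide) main8 struct8 hu hv
  · have hveq : v = emb n u ((-1 : ℤ), (1 : ℤ)) := by
      rw [Prod.ext_iff]
      constructor
      · show v.1 = u.1 + ((-1 : ℤ) : ZMod n)
        push_cast
        first
        | (rw [e1]; ring)
        | rw [e1]
      · show v.2 = u.2 + ((1 : ℤ) : ZMod n)
        push_cast
        first
        | (rw [e2]; ring)
        | rw [e2]
    rw [hveq] at hv
    exact posKeyGen n hn g h u ((-1 : ℤ), (1 : ℤ)) cells7 idx7 cand7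
      (by decide) (by decide) (by decide) (by decide) (by decide) (by decide) (by decide)
      (by decide) (by decide) (by decide) main7 struct7 hu hv
  · have hveq : v = emb n u ((1 : ℤ), (0 : ℤ)) := by
      rw [Prod.ext_iff]
      constructor
      · show v.1 = u.1 + ((1 : ℤ) : ZMod n)
        push_cast
        first
        | (rw [e1]; ring)
        | rw [e1]
      · show v.2 = u.2 + ((0 : ℤ) : ZMod n)
        push_cast
        first
        | (rw [e2]; ring)
        | rw [e2]
    rw [hveq] at hv
    exact posKeyGen n hn g h u ((1 : ℤ), (0 : ℤ)) cells1 idx1 cand1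
      (by decide) (by decide) (by decide) (by decide) (by decide) (by decide) (by decide)
      (by decide) (by decide) (by decide) main1 struct1 hu hv
  · have hveq : v = emb n u ((1 : ℤ), (-1 : ℤ)) := by
      rw [Prod.ext_iff]
      constructor
      · show v.1 = u.1 + ((1 : ℤ) : ZMod n)
        push_cast
        first
        | (rw [e1]; ring)
        | rw [e1]
      · show v.2 = u.2 + ((-1 : ℤ) : ZMod n)
        push_cast
        first
        | (rw [e2]; ring)
        | rw [e2]
    rw [hveq] at hv
    exact posKeyGen n hn g h u ((1 : ℤ), (-1 : ℤ)) cells6 idx6 cand6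
      (by decide) (by decide) (by decide) (by decide) (by decide) (by decide) (by decide)
      (by decide) (by decide) (by decide) main6 struct6 hu hv
  · have hveq : v = emb n u ((1 : ℤ), (1 : ℤ)) := by
      rw [Prod.ext_iff]
      constructor
      · show v.1 = u.1 + ((1 : ℤ) : ZMod n)
        push_cast
        first
        | (rw [e1]; ring)
        | rw [e1]
      · show v.2 = u.2 + ((1 : ℤ) : ZMod n)
        push_cast
        first
        | (rw [e2]; ring)
        | rw [e2]
    rw [hveq] at hv
    exact posKeyGen n hn g h u ((1 : ℤ), (1 : ℤ)) cells5 idx5 cand5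
      (by decide) (by decide) (by decide) (by decide) (by decide) (by decide) (by decide)
      (by decide) (by decide) (by decide) main5 struct5 hu hv

lemma stepIsolated (n : ℕ) (hn : 5 ≤ n) (g1 : ZMod n × ZMod n → Bool)
    (hkey : ∀ u v, mooreAdj n u v → g1 u = true → g1 v = true → False) (w : ZMod n × ZMod n) :
    torusMajStep n g1 w = false := by
  have h10 : (1 : ZMod n) ≠ 0 := by
    haveI : Fact (1 < n) := ⟨by omega⟩; exact one_ne_zero
  have neE : w ≠ (w.1 + 1, w.2) := fun he => by
    have hq := congrArg Prod.fst he; simp at hq; exact h10 hq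
  have neW : w ≠ (w.1 - 1, w.2) := fun he => by
    have hq := congrArg Prod.fst he; simp [sub_eq_add_neg] at hq; exact h10 hq
  have neN : w ≠ (w.1, w.2 + 1) := fun he => by
    have hq := congrArg Prod.snd he; simp at hq; exact h10 hq
  have neS : w ≠ (w.1, w.2 - 1) := fun he => by
    have hq := congrArg Prod.snd he; simp [sub_eq_add_neg] at hq; exact h10 hq
  have neEN : ((w.1 + 1, w.2) : ZMod n × ZMod n) ≠ (w.1, w.2 + 1) := fun he => by
    have hq := congrArg Prod.fst he; simp at hq; exact h10 hq
  have neES : ((w.1 + 1, w.2) : ZMod n × ZMod n) ≠ (w.1, w.2 - 1) := fun he => by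
    have hq := congrArg Prod.fst he; simp at hq; exact h10 hq
  have neWN : ((w.1 - 1, w.2) : ZMod n × ZMod n) ≠ (w.1, w.2 + 1) := fun he => by
    have hq := congrArg Prod.fst he; simp [sub_eq_add_neg] at hq; exact h10 hq
  have neWS : ((w.1 - 1, w.2) : ZMod n × ZMod n) ≠ (w.1, w.2 - 1) := fun he => by
    have hq := congrArg Prod.fst he; simp [sub_eq_add_neg] at hq; exact h10 hq
  have aE : mooreAdj n w (w.1 + 1, w.2) := ⟨neE, Or.inr (Or.inr rfl), Or.inl rfl⟩
  have aW : mooreAdj n w (w.1 - 1, w.2) := ⟨neW, Or.inr (Or.inl (by ring)), Or.inl rfl⟩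
  have aN : mooreAdj n w (w.1, w.2 + 1) := ⟨neN, Or.inl rfl, Or.inr (Or.inr rfl)⟩
  have aS : mooreAdj n w (w.1, w.2 - 1) := ⟨neS, Or.inl rfl, Or.inr (Or.inl (by ring))⟩
  have aEN : mooreAdj n (w.1 + 1, w.2) (w.1, w.2 + 1) :=
    ⟨neEN, Or.inr (Or.inl rfl), Or.inr (Or.inr rfl)⟩
  have aES : mooreAdj n (w.1 + 1, w.2) (w.1, w.2 - 1) :=
    ⟨neES, Or.inr (Or.inl rfl), Or.inr (Or.inl (by ring))⟩
  have aWN : mooreAdj n (w.1 - 1, w.2) (w.1, w.2 + 1) :=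
    ⟨neWN, Or.inr (Or.inr (by ring)), Or.inr (Or.inr rfl)⟩
  have aWS : mooreAdj n (w.1 - 1, w.2) (w.1, w.2 - 1) :=
    ⟨neWS, Or.inr (Or.inr (by ring)), Or.inr (Or.inl (by ring))⟩
  cases h0 : g1 w <;> cases hE : g1 (w.1 + 1, w.2) <;> cases hW : g1 (w.1 - 1, w.2) <;>
    cases hN : g1 (w.1, w.2 + 1) <;> cases hS : g1 (w.1, w.2 - 1) <;>
    first
      | exact (hkey w _ aE h0 hE).elim
      | exact (hkey w _ aW h0 hW).elim
      | exact (hkey w _ aN h0 hN).elim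
      | exact (hkey w _ aS h0 hS).elim
      | exact (hkey _ _ aEN hE hN).elim
      | exact (hkey _ _ aES hE hS).elim
      | exact (hkey _ _ aWN hW hN).elim
      | exact (hkey _ _ aWS hW hS).elim
      | simp [torusMajStep, vnCount, hE, hW, hN, hS, h0]

/-- In the majority model on the torus with von Neumann neighborhood (n ≥ 5): if the
largest blue cluster in generation `g_j` has size at most 3, then the largest blue
cluster in `g_{j+1}` has size at most 1, and `g_{j+2}` is entirely red. -/
theorem stmt11 (n : ℕ) (hn : 5 ≤ n) (g : ZMod n × ZMod n → Bool)
    (h : ¬ HasBlueClusterOfSize n g 4) :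
    ¬ HasBlueClusterOfSize n (torusMajStep n g) 2 ∧
      (∀ v, torusMajStep n (torusMajStep n g) v = false) := by
  have key : ∀ u v, mooreAdj n u v → torusMajStep n g u = true →
      torusMajStep n g v = true → False :=
    fun u v hadj hu hv => keyLemma n hn g h u v hadj hu hv
  constructor
  · rintro ⟨S, hcard, hblue, hconn⟩
    obtain ⟨a, b, hne, rfl⟩ := Finset.card_eq_two.mp hcard
    exact key a b (adj_of_conn_two n hne hconn) (hblue a (by simp)) (hblue b (by simp))
  · intro w
    exact stepIsolated n hn (torusMajStep n g) key w
end

section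
/- In the biased majority model on the torus T_{n,n} with von Neumann neighborhood, the diagonal pair {(i,j), (i+1 mod n, j+1 mod n)} is a b-eternal set: if both its cells are blue in some generation, then every subsequent generation contains at least one blue cell. -/
lemma step_diag {n : ℕ} {g : ZMod n × ZMod n → Bool} {a b : ZMod n}
    (h1 : g (a, b) = true) (h2 : g (a + 1, b + 1) = true) :
    torusBMajStep n g (a + 1, b) = true ∧ torusBMajStep n g (a, b + 1) = true := by
  constructor <;>
  · simp only [torusBMajStep, vnCount, add_sub_cancel_right, decide_eq_true_eq]
    simp only [h1, h2, if_true]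
    split_ifs <;> omega

lemma step_anti {n : ℕ} {g : ZMod n × ZMod n → Bool} {a b : ZMod n}
    (h1 : g (a, b) = true) (h2 : g (a + 1, b - 1) = true) :
    torusBMajStep n g (a, b - 1) = true ∧ torusBMajStep n g (a + 1, b) = true := by
  constructor <;>
  · simp only [torusBMajStep, vnCount, add_sub_cancel_right, sub_add_cancel, decide_eq_true_eq]
    simp only [h1, h2, if_true]
    split_ifs <;> omega

lemma invariant_step {n : ℕ} (g : ZMod n × ZMod n → Bool)
    (h : (∃ a b : ZMod n, g (a, b) = true ∧ g (a + 1, b + 1) = true) ∨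
         (∃ a b : ZMod n, g (a, b) = true ∧ g (a + 1, b - 1) = true)) :
    (∃ a b : ZMod n, torusBMajStep n g (a, b) = true ∧ torusBMajStep n g (a + 1, b + 1) = true) ∨
    (∃ a b : ZMod n, torusBMajStep n g (a, b) = true ∧ torusBMajStep n g (a + 1, b - 1) = true) := by
  rcases h with ⟨a, b, h1, h2⟩ | ⟨a, b, h1, h2⟩
  · obtain ⟨p, q⟩ := step_diag h1 h2
    right
    exact ⟨a, b + 1, q, by simpa using p⟩
  · obtain ⟨p, q⟩ := step_anti h1 h2
    left
    exact ⟨a, b - 1, p, by simpa using q⟩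

/-- In the biased majority model on the torus with von Neumann neighborhood (n ≥ 3),
the diagonal pair `{(i,j), (i+1,j+1)}` is b-eternal: if both its cells are blue, then
every subsequent generation contains at least one blue cell. -/
theorem stmt14 (n : ℕ) (hn : 3 ≤ n) (i j : ZMod n) (g : ZMod n × ZMod n → Bool)
    (h1 : g (i, j) = true) (h2 : g (i + 1, j + 1) = true) (t : ℕ) :
    ∃ v, (torusBMajStep n)^[t] g v = true := by
  have key : ∀ t : ℕ,
      (∃ a b : ZMod n, (torusBMajStep n)^[t] g (a, b) = true ∧
        (torusBMajStep n)^[t] g (a + 1, b + 1) = true) ∨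
      (∃ a b : ZMod n, (torusBMajStep n)^[t] g (a, b) = true ∧
        (torusBMajStep n)^[t] g (a + 1, b - 1) = true) := by
    intro t
    induction t with
    | zero => exact Or.inl ⟨i, j, h1, h2⟩
    | succ t ih =>
      rw [Function.iterate_succ_apply']
      exact invariant_step _ ih
  rcases key t with ⟨a, b, hb, _⟩ | ⟨a, b, hb, _⟩ <;> exact ⟨(a, b), hb⟩
end
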